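/- arXiv:2405.17638 — 4 statements merged into one kernel-verified Lean document; each statement's English description precedes it below -/
import Mathlib

section
/- Assume the D×D submatrix Ŝ_D is irreducible and aperiodic with spectral radius λ < 1, and let ν be the quasi-stationary distribution, i.e. the unique probability vector on D with ν^T Ŝ_D = λ ν^T. Then for every integer τ ≥ 1 and every submultiplicative norm ‖·‖ on D×D real matrices (i.e. ‖AB‖ ≤ ‖A‖·‖B‖ for all A, B), one has ‖(I − Ŝ_D^τ)^{-1}‖ ≥ E_ν[T]/τ, where E_ν[T] = ∑_{i∈D} ν(i)·E_i[T]. -/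
open MeasureTheory Finset Filter
open scoped ENNReal NNReal ENat

noncomputable section

namespace RareTD

variable {n : ℕ}

/-- `P` is a row-stochastic matrix. -/
def IsStochastic (P : Matrix (Fin n) (Fin n) ℝ) : Prop :=
  (∀ i j, 0 ≤ P i j) ∧ ∀ i, ∑ j, P i j = 1

/-- Irreducibility of a nonnegative matrix. -/
def IsIrreducible (P : Matrix (Fin n) (Fin n) ℝ) : Prop :=
  ∀ i j, ∃ m : ℕ, 0 < m ∧ 0 < (P ^ m) i j

/-- `Pr i` is the law of the Markov chain with transition matrix `P` started at `i`,
characterized by its finite-dimensional distributions. -/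
def IsMarkovFamily (P : Matrix (Fin n) (Fin n) ℝ)
    (Pr : Fin n → Measure (ℕ → Fin n)) : Prop :=
  (∀ i, IsProbabilityMeasure (Pr i)) ∧
    ∀ (i : Fin n) (m : ℕ) (x : ℕ → Fin n),
      (Pr i {ω | ∀ t ≤ m, ω t = x t}).toReal =
        (if x 0 = i then 1 else 0) * ∏ t ∈ Finset.range m, P (x t) (x (t + 1))

/-- The matrix `S` of the chain stopped on exiting `D`. -/
def stopMat (P : Matrix (Fin n) (Fin n) ℝ) (D : Finset (Fin n)) :
    Matrix (Fin n) (Fin n) ℝ :=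
  fun i j => if i ∈ D then P i j else if i = j then 1 else 0

/-- Exit time `T = min {t ≥ 0 : ω t ∉ D}`, with value `⊤` if the path never leaves `D`. -/
def exitT (D : Finset (Fin n)) (ω : ℕ → Fin n) : ℕ∞ :=
  ⨅ (t : ℕ) (_ : ω t ∉ D), (t : ℕ∞)

/-- Hitting time of a set at positive times, `min {t > 0 : ω t ∈ A}`. -/
def hitT (A : Set (Fin n)) (ω : ℕ → Fin n) : ℕ∞ :=
  ⨅ (t : ℕ) (_ : 0 < t ∧ ω t ∈ A), (t : ℕ∞)

/-- The stopped path `t ↦ X_{t ∧ T}`. -/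
def stopped (D : Finset (Fin n)) (ω : ℕ → Fin n) : ℕ → Fin n
  | 0 => ω 0
  | t + 1 => if stopped D ω t ∈ D then ω (t + 1) else stopped D ω t

/-- `R_D`, the reward restricted to `D`. -/
def RD (D : Finset (Fin n)) (R : Fin n → ℝ) : Fin n → ℝ := fun i => if i ∈ D then R i else 0

/-- The value function `u(i) = E_i[∑_{t=0}^{T} R(X_t)]`, in `[0,∞]`. -/
def valueE (Pr : Fin n → Measure (ℕ → Fin n)) (D : Finset (Fin n)) (R : Fin n → ℝ)
    (i : Fin n) : ℝ≥0∞ :=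
  ∑' t : ℕ, ∫⁻ ω, Set.indicator {ω' : ℕ → Fin n | (t : ℕ∞) ≤ exitT D ω'}
      (fun ω' => ENNReal.ofReal (R (ω' t))) ω ∂(Pr i)

/-- The real-valued value function. -/
def valueR (Pr : Fin n → Measure (ℕ → Fin n)) (D : Finset (Fin n)) (R : Fin n → ℝ)
    (i : Fin n) : ℝ := (valueE Pr D R i).toReal

/-- Replace by `0` every row and column with index outside `D`. -/
def zeroD (D : Finset (Fin n)) (M : Matrix (Fin n) (Fin n) ℝ) : Matrix (Fin n) (Fin n) ℝ :=
  fun i j => if i ∈ D ∧ j ∈ D then M i j else 0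

/-- The asymptotic variance `σ_i²` of the LSTD estimator. -/
def avar (P : Matrix (Fin n) (Fin n) ℝ) (Pr : Fin n → Measure (ℕ → Fin n))
    (D : Finset (Fin n)) (R : Fin n → ℝ) (μ : Fin n → ℝ) (τ : ℕ) (i : Fin n) : ℝ :=
  ∑ k ∈ D, (μ k)⁻¹ * ((((1 : Matrix (Fin n) (Fin n) ℝ) - zeroD D (stopMat P D ^ τ))⁻¹) i k) ^ 2 *
    ∫ ω, (∑ t ∈ Finset.range τ, RD D R (stopped D ω t)
        + valueR Pr D R (stopped D ω τ) - valueR Pr D R k) ^ 2 ∂(Pr k)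

/-- Mean exit time `E_i[T] = ∑_{t≥0} P_i[T > t]`, in `[0,∞]`. -/
def meanExit (Pr : Fin n → Measure (ℕ → Fin n)) (D : Finset (Fin n)) (i : Fin n) : ℝ≥0∞ :=
  ∑' t : ℕ, Pr i {ω | (t : ℕ∞) < exitT D ω}

/-- The event `T_ℓ^τ < min (T_k^τ, T_{Dᶜ∖{ℓ}}^τ)` for the `τ`-step chain. -/
def Qset (D : Finset (Fin n)) (k ℓ : Fin n) : Set (ℕ → Fin n) :=
  {ω | hitT {ℓ} ω < min (hitT {k} ω) (hitT ((D : Set (Fin n))ᶜ \ {ℓ}) ω)}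

/-- Green's function of the `τ`-step chain: `E_i[∑_{t=0}^{T^τ-1} 1{Y_t^τ = k}]`. -/
def greenY (PrY : Fin n → Measure (ℕ → Fin n)) (D : Finset (Fin n)) (i k : Fin n) : ℝ≥0∞ :=
  ∑' t : ℕ, PrY i {ω | (t : ℕ∞) < exitT D ω ∧ ω t = k}

/-- Green's function of the chain: `E_ℓ[∑_{t=0}^{T} 1{X_t = j}]` (the sum includes `t = T`). -/
def greenX (Pr : Fin n → Measure (ℕ → Fin n)) (D : Finset (Fin n)) (ℓ j : Fin n) : ℝ≥0∞ :=
  ∑' t : ℕ, Pr ℓ {ω | (t : ℕ∞) ≤ exitT D ω ∧ ω t = j}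


section aux
variable {β : Type*} [Fintype β] [DecidableEq β]

lemma powEntryNonneg (S : Matrix β β ℝ) (hS : ∀ a b, 0 ≤ S a b) :
    ∀ (m : ℕ) (a b : β), 0 ≤ (S ^ m) a b := by
  intro m
  induction m with
  | zero => intro a b; rw [pow_zero, Matrix.one_apply]; positivity
  | succ m ih =>
    intro a b
    rw [pow_succ, Matrix.mul_apply]
    exact Finset.sum_nonneg fun c _ => mul_nonneg (ih a c) (hS c b)

lemma pathSum (S : Matrix β β ℝ) :
    ∀ (t : ℕ) (v : β → ℝ),
      ∑ x : Fin (t+1) → β, v (x 0) * ∏ s : Fin t, S (x s.castSucc) (x s.succ)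
        = ∑ a, v a * ∑ b, (S ^ t) a b := by
  intro t
  induction t with
  | zero =>
    intro v
    rw [← (Equiv.funUnique (Fin 1) β).symm.sum_comp]
    simp [Matrix.one_apply]
  | succ t ih =>
    intro v
    rw [← ((Fin.consEquiv fun _ => β)).sum_comp, Fintype.sum_prod_type]
    have hx : ∀ (a : β) (y : Fin (t+1) → β),
        v ((Fin.consEquiv fun _ => β) (a, y) 0) *
          ∏ s : Fin (t+1), S ((Fin.consEquiv fun _ => β) (a, y) s.castSucc)
            ((Fin.consEquiv fun _ => β) (a, y) s.succ)
        = v a * (S a (y 0) * ∏ s : Fin t, S (y s.castSucc) (y s.succ)) := by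
      intro a y
      rw [show ((Fin.consEquiv fun _ => β) (a, y) : Fin (t+2) → β)
          = Fin.cons (α := fun _ => β) a y from rfl]
      simp only [Fin.prod_univ_succ, Fin.cons_zero, ← Fin.succ_castSucc, Fin.cons_succ,
        Fin.castSucc_zero]
    calc ∑ a, ∑ y : Fin (t+1) → β, v ((Fin.consEquiv fun _ => β) (a, y) 0) *
          ∏ s : Fin (t+1), S ((Fin.consEquiv fun _ => β) (a, y) s.castSucc)
            ((Fin.consEquiv fun _ => β) (a, y) s.succ)
        = ∑ a, ∑ y : Fin (t+1) → β, (fun b => v a * S a b) (y 0) *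
            ∏ s : Fin t, S (y s.castSucc) (y s.succ) := by
          refine Finset.sum_congr rfl fun a _ => Finset.sum_congr rfl fun y _ => ?_
          rw [hx]; ring
      _ = ∑ a, ∑ b, (v a * S a b) * ∑ c, (S ^ t) b c := by
          refine Finset.sum_congr rfl fun a _ => ?_
          exact ih (fun b => v a * S a b)
      _ = ∑ a, v a * ∑ c, (S ^ (t+1)) a c := by
          refine Finset.sum_congr rfl fun a _ => ?_
          calc ∑ b, (v a * S a b) * ∑ c, (S ^ t) b c
              = ∑ b, ∑ c, v a * (S a b * (S ^ t) b c) := by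
                simp only [Finset.mul_sum]; exact Finset.sum_congr rfl fun b _ =>
                  Finset.sum_congr rfl fun c _ => by ring
            _ = ∑ c, ∑ b, v a * (S a b * (S ^ t) b c) := Finset.sum_comm
            _ = ∑ c, v a * (S ^ (t+1)) a c := by
                simp only [pow_succ', Matrix.mul_apply, Finset.mul_sum]
            _ = v a * ∑ c, (S ^ (t+1)) a c := (Finset.mul_sum _ _ _).symm

lemma vecMulPow (S : Matrix β β ℝ) (ν : β → ℝ) (lam : ℝ)
    (h : Matrix.vecMul ν S = lam • ν) :
    ∀ m : ℕ, Matrix.vecMul ν (S ^ m) = lam ^ m • ν := by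
  intro m
  induction m with
  | zero => simp [Matrix.vecMul_one]
  | succ m ih =>
    rw [pow_succ, ← Matrix.vecMul_vecMul, ih, Matrix.smul_vecMul, h, smul_smul, pow_succ]

end aux


/-- Lemma 1 of the paper. If the `D × D` submatrix `Ŝ_D` is irreducible and
aperiodic, with quasi-stationary distribution `ν` and corresponding eigenvalue `λ < 1`, then for
every `τ ≥ 1` and every submultiplicative matrix norm `N`,
`N ((I - Ŝ_D^τ)⁻¹) ≥ E_ν[T] / τ`. -/
theorem stmt0 {n : ℕ} (hn : 2 ≤ n) (D : Finset (Fin n)) (hD : D.Nonempty)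
    (hDne : D ≠ Finset.univ)
    (P : Matrix (Fin n) (Fin n) ℝ) (hP : IsStochastic P)
    (Pr : Fin n → Measure (ℕ → Fin n)) (hPr : IsMarkovFamily P Pr)
    (Shat : Matrix {x : Fin n // x ∈ D} {x : Fin n // x ∈ D} ℝ)
    (hShat : ∀ a b, Shat a b = P a.1 b.1)
    -- `Ŝ_D` is irreducible
    (hirr : ∀ a b, ∃ m : ℕ, 0 < m ∧ 0 < (Shat ^ m) a b)
    -- `Ŝ_D` is aperiodic: for each state, the gcd of the return times is `1`
    (haper : ∀ a : {x : Fin n // x ∈ D}, ∀ d : ℕ,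
      (∀ m : ℕ, 0 < m → 0 < (Shat ^ m) a a → d ∣ m) → d = 1)
    -- the spectral radius `λ < 1` and the quasi-stationary distribution `ν`, i.e. the
    -- (unique) probability vector on `D` with `νᵀ Ŝ_D = λ νᵀ`
    (lam : ℝ) (hlam : lam < 1)
    (ν : {x : Fin n // x ∈ D} → ℝ) (hν0 : ∀ a, 0 ≤ ν a)
    (hν1 : ∑ a : {x : Fin n // x ∈ D}, ν a = 1)
    (heig : Matrix.vecMul ν Shat = lam • ν)
    (τ : ℕ) (hτ : 1 ≤ τ)
    -- `N` is a submultiplicative norm on `D × D` real matrices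
    (N : Matrix {x : Fin n // x ∈ D} {x : Fin n // x ∈ D} ℝ → ℝ)
    (hNnonneg : ∀ A, 0 ≤ N A) (hNzero : ∀ A, N A = 0 → A = 0)
    (hNadd : ∀ A B, N (A + B) ≤ N A + N B)
    (hNsmul : ∀ (c : ℝ) (A), N (c • A) = |c| * N A)
    (hNmul : ∀ A B, N (A * B) ≤ N A * N B) :
    (∑ a : {x : Fin n // x ∈ D}, ENNReal.ofReal (ν a) * meanExit Pr D a.1) / (τ : ℝ≥0∞)
      ≤ ENNReal.ofReal (N ((1 - Shat ^ τ)⁻¹)) := by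
  classical
  have hprob := hPr.1
  have hfdd := hPr.2
  have hSnn : ∀ a b : {x : Fin n // x ∈ D}, 0 ≤ Shat a b := fun a b => by
    rw [hShat]; exact hP.1 _ _
  have hpow : ∀ (m : ℕ) (a b : {x : Fin n // x ∈ D}), 0 ≤ (Shat ^ m) a b :=
    powEntryNonneg Shat hSnn
  have hpowν : ∀ m : ℕ, Matrix.vecMul ν (Shat ^ m) = lam ^ m • ν := vecMulPow Shat ν lam heig
  obtain ⟨a0, ha0⟩ : ∃ a : {x : Fin n // x ∈ D}, 0 < ν a := by
    by_contra h
    push_neg at h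
    have h0 : ∑ a : {x : Fin n // x ∈ D}, ν a = 0 :=
      Finset.sum_eq_zero fun a _ => le_antisymm (h a) (hν0 a)
    rw [hν1] at h0; norm_num at h0
  have hlam0 : 0 ≤ lam := by
    have h1 : (Matrix.vecMul ν Shat) a0 = lam * ν a0 := by rw [heig]; rfl
    have h2 : 0 ≤ (Matrix.vecMul ν Shat) a0 :=
      Finset.sum_nonneg fun c _ => mul_nonneg (hν0 c) (hSnn c a0)
    nlinarith
  have hkey : ∀ (m : ℕ) (a b : {x : Fin n // x ∈ D}),
      ν a * (Shat ^ m) a b ≤ lam ^ m * ν b := by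
    intro m a b
    have h1 : (Matrix.vecMul ν (Shat ^ m)) b = lam ^ m * ν b := by rw [hpowν]; rfl
    have h2 : ν a * (Shat ^ m) a b ≤ (Matrix.vecMul ν (Shat ^ m)) b :=
      Finset.single_le_sum (f := fun c => ν c * (Shat ^ m) c b)
        (fun c _ => mul_nonneg (hν0 c) (hpow m c b)) (Finset.mem_univ a)
    rw [h1] at h2; exact h2
  have hlampos : 0 < lam := by
    obtain ⟨m, hm, hmpos⟩ := hirr a0 a0
    have hl : 0 < lam ^ m := by nlinarith [hkey m a0 a0, mul_pos ha0 hmpos]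
    rcases hlam0.eq_or_lt with h | h
    · rw [← h, zero_pow hm.ne'] at hl; exact absurd hl (lt_irrefl 0)
    · exact h
  have hνpos : ∀ b : {x : Fin n // x ∈ D}, 0 < ν b := by
    intro b
    obtain ⟨m, hm, hmpos⟩ := hirr a0 b
    nlinarith [hkey m a0 b, mul_pos ha0 hmpos, pow_pos hlampos m, hν0 b]
  have hτ0 : τ ≠ 0 := by omega
  have hlamτ : lam ^ τ < 1 := pow_lt_one₀ hlam0 hlam hτ0
  have hOneSub : (0:ℝ) < 1 - lam ^ τ := by linarith
  -- invertibility of 1 - Shat ^ τ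
  have hdet : (1 - Shat ^ τ).det ≠ 0 := by
    intro hdet0
    obtain ⟨v, hv0, hv⟩ := (Matrix.exists_mulVec_eq_zero_iff).2 hdet0
    have hfix : (Shat ^ τ).mulVec v = v := by
      rw [Matrix.sub_mulVec, Matrix.one_mulVec, sub_eq_zero] at hv
      exact hv.symm
    have hfixk : ∀ k : ℕ, (Shat ^ (τ * k)).mulVec v = v := by
      intro k
      induction k with
      | zero => simp [Matrix.one_mulVec]
      | succ k ih =>
        rw [Nat.mul_succ, pow_add, ← Matrix.mulVec_mulVec, hfix, ih]
    obtain ⟨a, ha⟩ : ∃ a, v a ≠ 0 := Function.ne_iff.1 hv0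
    have hCa : |v a| ≤ ∑ b, (ν b / ν a) * |v b| := by
      have h5 : (ν a / ν a) * |v a| = |v a| := by
        rw [div_self (hνpos a).ne']; ring
      calc |v a| = (ν a / ν a) * |v a| := h5.symm
        _ ≤ ∑ b, (ν b / ν a) * |v b| :=
          Finset.single_le_sum (f := fun b => (ν b / ν a) * |v b|)
            (fun b _ => mul_nonneg (div_nonneg (hν0 b) (hν0 a)) (abs_nonneg _))
            (Finset.mem_univ a)
    have hCpos : 0 < ∑ b, (ν b / ν a) * |v b| := lt_of_lt_of_le (abs_pos.2 ha) hCa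
    obtain ⟨k, hk⟩ := exists_pow_lt_of_lt_one
      (div_pos (abs_pos.2 ha) hCpos) hlamτ
    have hub : |v a| ≤ (lam ^ τ) ^ k * ∑ b, (ν b / ν a) * |v b| := by
      have h1 : v a = ∑ b, (Shat ^ (τ * k)) a b * v b := by
        conv_lhs => rw [← hfixk k]
        simp [Matrix.mulVec, dotProduct]
      calc |v a| = |∑ b, (Shat ^ (τ * k)) a b * v b| := by rw [← h1]
        _ ≤ ∑ b, |(Shat ^ (τ * k)) a b * v b| := Finset.abs_sum_le_sum_abs _ _
        _ ≤ ∑ b, (lam ^ (τ * k) * ν b / ν a) * |v b| := by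
            refine Finset.sum_le_sum fun b _ => ?_
            rw [abs_mul]
            refine mul_le_mul_of_nonneg_right ?_ (abs_nonneg _)
            rw [abs_of_nonneg (hpow _ a b)]
            rw [div_eq_mul_inv, ← mul_le_mul_iff_right₀ (hνpos a)]
            calc ν a * (Shat ^ (τ * k)) a b ≤ lam ^ (τ * k) * ν b := hkey _ a b
              _ = ν a * (lam ^ (τ * k) * ν b * (ν a)⁻¹) := by
                  have hna := (hνpos a).ne'
                  field_simp
        _ = (lam ^ τ) ^ k * ∑ b, (ν b / ν a) * |v b| := by
            rw [Finset.mul_sum, ← pow_mul]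
            refine Finset.sum_congr rfl fun b _ => ?_
            field_simp
    have hfin : (lam ^ τ) ^ k * ∑ b, (ν b / ν a) * |v b| < |v a| :=
      (lt_div_iff₀ hCpos).1 hk
    linarith
  have hMinv : (1 - Shat ^ τ) * (1 - Shat ^ τ)⁻¹ = 1 :=
    Matrix.mul_nonsing_inv _ (isUnit_iff_ne_zero.2 hdet)
  have hνM : Matrix.vecMul ν (1 - Shat ^ τ) = (1 - lam ^ τ) • ν := by
    rw [Matrix.vecMul_sub, Matrix.vecMul_one, hpowν, sub_smul, one_smul]
  have hνA : Matrix.vecMul ν (1 - Shat ^ τ)⁻¹ = (1 - lam ^ τ)⁻¹ • ν := by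
    have h1 : Matrix.vecMul (Matrix.vecMul ν (1 - Shat ^ τ)) (1 - Shat ^ τ)⁻¹ = ν := by
      rw [Matrix.vecMul_vecMul, hMinv, Matrix.vecMul_one]
    rw [hνM, Matrix.smul_vecMul] at h1
    calc Matrix.vecMul ν (1 - Shat ^ τ)⁻¹
        = (1 - lam ^ τ)⁻¹ • ((1 - lam ^ τ) • Matrix.vecMul ν (1 - Shat ^ τ)⁻¹) := by
          rw [smul_smul, inv_mul_cancel₀ hOneSub.ne', one_smul]
      _ = (1 - lam ^ τ)⁻¹ • ν := by rw [h1]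
  -- norm lower bound
  have hNA : (1 - lam ^ τ)⁻¹ ≤ N (1 - Shat ^ τ)⁻¹ := by
    set V : Matrix {x : Fin n // x ∈ D} {x : Fin n // x ∈ D} ℝ :=
      Matrix.of fun _ b => ν b with hV
    have hVA : V * (1 - Shat ^ τ)⁻¹ = (1 - lam ^ τ)⁻¹ • V := by
      ext a b
      have h2 : ∑ c, ν c * (1 - Shat ^ τ)⁻¹ c b = (1 - lam ^ τ)⁻¹ * ν b := by
        have h3 := congrFun hνA b
        simpa [Matrix.vecMul, dotProduct] using h3
      simp only [Matrix.mul_apply, Matrix.smul_apply, hV, Matrix.of_apply, smul_eq_mul]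
      exact h2
    have hNV : 0 < N V := by
      rcases (hNnonneg V).eq_or_lt with h | h
      · exfalso
        have h4 := hNzero V h.symm
        have h5 := congrFun (congrFun h4 a0) a0
        simp only [hV, Matrix.of_apply, Matrix.zero_apply] at h5
        exact (hνpos a0).ne' h5
      · exact h
    have h2 : N (V * (1 - Shat ^ τ)⁻¹) ≤ N V * N (1 - Shat ^ τ)⁻¹ := hNmul _ _
    rw [hVA, hNsmul, abs_of_pos (inv_pos.2 hOneSub)] at h2
    nlinarith [hNnonneg (1 - Shat ^ τ)⁻¹]
  -- probability bound
  have hrow : ∀ (t : ℕ) (a : {x : Fin n // x ∈ D}),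
      Pr a.1 {ω | (t : ℕ∞) < exitT D ω} ≤ ENNReal.ofReal (∑ b, (Shat ^ t) a b) := by
    intro t a
    have hstay : ∀ ω : ℕ → Fin n, (t : ℕ∞) < exitT D ω → ∀ s ≤ t, ω s ∈ D := by
      intro ω hω s hs
      by_contra hsD
      have h1 : exitT D ω ≤ (s : ℕ∞) :=
        show (⨅ (u : ℕ) (_ : ω u ∉ D), (u : ℕ∞)) ≤ (s : ℕ∞) from iInf₂_le s hsD
      have h2 : (s : ℕ∞) ≤ (t : ℕ∞) := by exact_mod_cast hs
      exact lt_irrefl _ (lt_of_lt_of_le hω (h1.trans h2))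
    set ext : (Fin (t+1) → {x : Fin n // x ∈ D}) → ℕ → Fin n :=
      fun x s => if h : s < t + 1 then (x ⟨s, h⟩).1 else (x 0).1 with hext
    have hsub : {ω | (t : ℕ∞) < exitT D ω} ⊆
        ⋃ x ∈ (Finset.univ : Finset (Fin (t+1) → {x : Fin n // x ∈ D})),
          {ω : ℕ → Fin n | ∀ s ≤ t, ω s = ext x s} := by
      intro ω hω
      have hmem : ∀ s : Fin (t+1), ω s.1 ∈ D := fun s =>
        hstay ω hω s.1 (Nat.lt_succ_iff.1 s.2)
      refine Set.mem_iUnion₂.2 ⟨fun s => ⟨ω s.1, hmem s⟩, Finset.mem_univ _, ?_⟩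
      intro s hs
      simp only [hext]
      rw [dif_pos (Nat.lt_succ_iff.2 hs)]
    calc Pr a.1 {ω | (t : ℕ∞) < exitT D ω}
        ≤ Pr a.1 (⋃ x ∈ (Finset.univ : Finset (Fin (t+1) → {x : Fin n // x ∈ D})),
            {ω : ℕ → Fin n | ∀ s ≤ t, ω s = ext x s}) := measure_mono hsub
      _ ≤ ∑ x : Fin (t+1) → {x : Fin n // x ∈ D},
            Pr a.1 {ω : ℕ → Fin n | ∀ s ≤ t, ω s = ext x s} :=
          measure_biUnion_finset_le _ _
      _ = ∑ x : Fin (t+1) → {x : Fin n // x ∈ D}, ENNReal.ofReal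
            ((if ext x 0 = a.1 then 1 else 0) *
              ∏ s ∈ Finset.range t, P (ext x s) (ext x (s+1))) := by
          refine Finset.sum_congr rfl fun x _ => ?_
          have := hprob a.1
          rw [← hfdd a.1 t (ext x), ENNReal.ofReal_toReal (measure_ne_top _ _)]
      _ = ENNReal.ofReal (∑ x : Fin (t+1) → {x : Fin n // x ∈ D},
            (if ext x 0 = a.1 then 1 else 0) *
              ∏ s ∈ Finset.range t, P (ext x s) (ext x (s+1))) := by
          rw [ENNReal.ofReal_sum_of_nonneg]
          intro x _
          refine mul_nonneg ?_ (Finset.prod_nonneg fun s _ => hP.1 _ _)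
          split <;> norm_num
      _ = ENNReal.ofReal (∑ b, (Shat ^ t) a b) := by
          congr 1
          have hterm : ∀ x : Fin (t+1) → {x : Fin n // x ∈ D},
              (if ext x 0 = a.1 then (1:ℝ) else 0) *
                ∏ s ∈ Finset.range t, P (ext x s) (ext x (s+1))
              = (fun a' => if a' = a then (1:ℝ) else 0) (x 0) *
                  ∏ s : Fin t, Shat (x s.castSucc) (x s.succ) := by
            intro x
            congr 1
            · have h0 : ext x 0 = (x 0).1 := by
                simp only [hext]
                rw [dif_pos (Nat.succ_pos t)]
                exact congrArg (fun i => ((x i : {x : Fin n // x ∈ D}) : Fin n))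
                  (Fin.ext (by simp))
              rw [h0]
              exact if_congr Subtype.coe_injective.eq_iff rfl rfl
            · rw [Finset.prod_range (fun s => P (ext x s) (ext x (s+1)))]
              refine Finset.prod_congr rfl fun s _ => ?_
              have h1 : ext x s.1 = (x s.castSucc).1 := by
                simp only [hext]
                rw [dif_pos (show (s:ℕ) < t + 1 by omega)]
                exact congrArg (fun i => ((x i : {x : Fin n // x ∈ D}) : Fin n))
                  (Fin.ext (by simp))
              have h2 : ext x (s.1 + 1) = (x s.succ).1 := by
                simp only [hext]
                rw [dif_pos (show (s:ℕ) + 1 < t + 1 by omega)]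
                exact congrArg (fun i => ((x i : {x : Fin n // x ∈ D}) : Fin n))
                  (Fin.ext (by simp))
              rw [h1, h2, hShat]
          rw [Finset.sum_congr rfl fun x _ => hterm x,
            pathSum Shat t (fun a' => if a' = a then (1:ℝ) else 0)]
          simp [Finset.sum_ite_eq', ite_mul]
  -- summing over t
  have hsum_t : ∀ t : ℕ,
      ∑ a : {x : Fin n // x ∈ D}, ENNReal.ofReal (ν a) * Pr a.1 {ω | (t : ℕ∞) < exitT D ω}
        ≤ ENNReal.ofReal (lam ^ t) := by
    intro t
    calc ∑ a : {x : Fin n // x ∈ D}, ENNReal.ofReal (ν a) * Pr a.1 {ω | (t : ℕ∞) < exitT D ω}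
        ≤ ∑ a : {x : Fin n // x ∈ D},
            ENNReal.ofReal (ν a) * ENNReal.ofReal (∑ b, (Shat ^ t) a b) :=
          Finset.sum_le_sum fun a _ => mul_le_mul_right (hrow t a) _
      _ = ENNReal.ofReal (∑ a : {x : Fin n // x ∈ D}, ν a * ∑ b, (Shat ^ t) a b) := by
          rw [ENNReal.ofReal_sum_of_nonneg
            (fun a _ => mul_nonneg (hν0 a) (Finset.sum_nonneg fun b _ => hpow t a b))]
          exact Finset.sum_congr rfl fun a _ => (ENNReal.ofReal_mul (hν0 a)).symm
      _ = ENNReal.ofReal (lam ^ t) := by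
          congr 1
          calc ∑ a : {x : Fin n // x ∈ D}, ν a * ∑ b, (Shat ^ t) a b
              = ∑ b : {x : Fin n // x ∈ D}, ∑ a : {x : Fin n // x ∈ D}, ν a * (Shat ^ t) a b := by
                simp only [Finset.mul_sum]; exact Finset.sum_comm
            _ = ∑ b : {x : Fin n // x ∈ D}, lam ^ t * ν b := by
                refine Finset.sum_congr rfl fun b _ => ?_
                have h3 := congrFun (hpowν t) b
                simpa [Matrix.vecMul, dotProduct] using h3
            _ = lam ^ t := by rw [← Finset.mul_sum, hν1, mul_one]
  have hLHS : ∑ a : {x : Fin n // x ∈ D}, ENNReal.ofReal (ν a) * meanExit Pr D a.1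
      ≤ ENNReal.ofReal ((1 - lam)⁻¹) := by
    calc ∑ a : {x : Fin n // x ∈ D}, ENNReal.ofReal (ν a) * meanExit Pr D a.1
        = ∑' t : ℕ, ∑ a : {x : Fin n // x ∈ D},
            ENNReal.ofReal (ν a) * Pr a.1 {ω | (t : ℕ∞) < exitT D ω} := by
          simp_rw [meanExit, ← ENNReal.tsum_mul_left]
          exact (Summable.tsum_finsetSum fun a _ => ENNReal.summable).symm
      _ ≤ ∑' t : ℕ, ENNReal.ofReal (lam ^ t) := ENNReal.tsum_le_tsum hsum_t
      _ = ENNReal.ofReal ((1 - lam)⁻¹) := by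
          rw [← ENNReal.ofReal_tsum_of_nonneg (fun t => pow_nonneg hlam0 t)
            (summable_geometric_of_lt_one hlam0 hlam),
            tsum_geometric_of_lt_one hlam0 hlam]
  refine le_trans (ENNReal.div_le_div_right hLHS _) ?_
  rw [ENNReal.div_le_iff_le_mul
    (Or.inl (by exact_mod_cast Nat.cast_ne_zero.2 hτ0)) (Or.inl (ENNReal.natCast_ne_top τ))]
  have hτR : (1:ℝ) ≤ (τ:ℝ) := by exact_mod_cast hτ
  have hreal : (1 - lam)⁻¹ ≤ N (1 - Shat ^ τ)⁻¹ * τ := by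
    have hgeom : 1 - lam ^ τ ≤ (1 - lam) * τ := by
      have hgs : (1 - lam) * ∑ i ∈ Finset.range τ, lam ^ i = 1 - lam ^ τ := by
        have h6 := geom_sum_mul lam τ
        linear_combination (-1 : ℝ) * h6
      have hsle : ∑ i ∈ Finset.range τ, lam ^ i ≤ (τ:ℝ) := by
        calc ∑ i ∈ Finset.range τ, lam ^ i ≤ ∑ _i ∈ Finset.range τ, (1:ℝ) :=
            Finset.sum_le_sum fun i _ => pow_le_one₀ hlam0 hlam.le
          _ = τ := by simp
      nlinarith
    have h3 : (1 - lam)⁻¹ ≤ (τ:ℝ) * (1 - lam ^ τ)⁻¹ := by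
      have h8 : (0:ℝ) < 1 - lam := by linarith
      rw [inv_eq_one_div,
        show (τ:ℝ) * (1 - lam ^ τ)⁻¹ = (τ:ℝ) / (1 - lam ^ τ) from (div_eq_mul_inv _ _).symm,
        div_le_div_iff₀ h8 hOneSub]
      nlinarith [hgeom]
    nlinarith [hNA]
  calc ENNReal.ofReal ((1 - lam)⁻¹) ≤ ENNReal.ofReal (N (1 - Shat ^ τ)⁻¹ * τ) :=
      ENNReal.ofReal_le_ofReal hreal
    _ = ENNReal.ofReal (N (1 - Shat ^ τ)⁻¹) * (τ : ℝ≥0∞) := by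
        rw [ENNReal.ofReal_mul (hNnonneg _), ENNReal.ofReal_natCast]


end RareTD
end
end

section
/- Assume P is irreducible. Then for every integer τ ≥ 1 and every k ∈ D, E_k[(∑_{t=0}^{τ−1} R_D(X_{t∧T}) + u(X_{τ∧T}) − u(k))²] ≤ ∑_{ℓ∈[n], ℓ≠k} (u(ℓ) − u(k))² · ∑_{t=1}^{τ} S^t(k,ℓ). -/
open MeasureTheory Finset Filter
open scoped ENNReal NNReal ENat

noncomputable section

namespace RareTD

variable {n : ℕ}

section Aux

/-- extension of a finite path to `ℕ` (constant after `m`). -/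
def pext (m : ℕ) (x : Fin (m + 1) → Fin n) : ℕ → Fin n :=
  fun t => x ⟨min t m, Nat.lt_succ_of_le (min_le_right _ _)⟩

lemma pext_apply (m : ℕ) (x : Fin (m + 1) → Fin n) {t : ℕ} (ht : t ≤ m) :
    pext m x t = x ⟨t, Nat.lt_succ_of_le ht⟩ := by
  simp only [pext]
  congr 1
  exact Fin.ext (by simpa using Nat.min_eq_left ht)

/-- weight of a path. -/
def wt (P : Matrix (Fin n) (Fin n) ℝ) (i : Fin n) (m : ℕ) (ω : ℕ → Fin n) : ℝ :=
  (if ω 0 = i then 1 else 0) * ∏ t ∈ Finset.range m, P (ω t) (ω (t + 1))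

/-- expectation of a cylinder functional as a finite path sum. -/
def PS (P : Matrix (Fin n) (Fin n) ℝ) (i : Fin n) (m : ℕ) (f : (ℕ → Fin n) → ℝ) : ℝ :=
  ∑ x : Fin (m + 1) → Fin n, wt P i m (pext m x) * f (pext m x)

def Cyl (m : ℕ) (x : Fin (m + 1) → Fin n) : Set (ℕ → Fin n) :=
  {ω | ∀ t ≤ m, ω t = pext m x t}

def restr (m : ℕ) (ω : ℕ → Fin n) : Fin (m + 1) → Fin n := fun t => ω t

lemma measurableSet_Cyl (m : ℕ) (x : Fin (m + 1) → Fin n) : MeasurableSet (Cyl m x) := by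
  have : Cyl m x = ⋂ t ∈ Set.Iic m, (fun ω : ℕ → Fin n => ω t) ⁻¹' {pext m x t} := by
    ext ω; simp [Cyl, Set.mem_iInter]
  rw [this]
  exact MeasurableSet.biInter (Set.to_countable _)
    fun t _ => (measurable_pi_apply t) (measurableSet_singleton _)

lemma mem_Cyl (m : ℕ) (x : Fin (m + 1) → Fin n) (ω : ℕ → Fin n) :
    ω ∈ Cyl m x ↔ restr m ω = x := by
  constructor
  · intro h
    funext t
    have ht : (t : ℕ) ≤ m := Nat.lt_succ_iff.mp t.2
    have := h t ht
    rw [pext_apply m x ht] at this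
    simpa [restr] using this
  · rintro rfl
    intro t ht
    rw [pext_apply m _ ht]
    rfl

lemma self_mem_Cyl (m : ℕ) (ω : ℕ → Fin n) : ω ∈ Cyl m (restr m ω) :=
  (mem_Cyl m _ ω).mpr rfl

lemma pext_restr_agree (m : ℕ) (ω : ℕ → Fin n) {t : ℕ} (ht : t ≤ m) :
    pext m (restr m ω) t = ω t := by
  rw [pext_apply m _ ht]; rfl

section decomp
variable {α : Type*} [AddCommMonoid α]

lemma f_decomp (m : ℕ) (f : (ℕ → Fin n) → α) (c : (Fin (m + 1) → Fin n) → α)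
    (hc : ∀ x, c x = f (pext m x))
    (hf : ∀ ω ω', (∀ t ≤ m, ω t = ω' t) → f ω = f ω') (ω : ℕ → Fin n) :
    f ω = ∑ x : Fin (m + 1) → Fin n, (Cyl m x).indicator (fun _ => c x) ω := by
  rw [Fintype.sum_eq_single (restr m ω), Set.indicator_of_mem (self_mem_Cyl m ω), hc]
  · exact hf _ _ fun t ht => (pext_restr_agree m ω ht).symm
  · intro x hx
    apply Set.indicator_of_notMem
    rw [mem_Cyl]
    exact fun h => absurd h.symm hx

end decomp

lemma toReal_Cyl {P : Matrix (Fin n) (Fin n) ℝ} {Pr : Fin n → Measure (ℕ → Fin n)}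
    (hPr : IsMarkovFamily P Pr) (i : Fin n) (m : ℕ) (x : Fin (m + 1) → Fin n) :
    (Pr i (Cyl m x)).toReal = wt P i m (pext m x) :=
  hPr.2 i m (pext m x)

lemma integral_eq_PS {P : Matrix (Fin n) (Fin n) ℝ} {Pr : Fin n → Measure (ℕ → Fin n)}
    (hPr : IsMarkovFamily P Pr) (i : Fin n) (m : ℕ) (f : (ℕ → Fin n) → ℝ)
    (hf : ∀ ω ω', (∀ t ≤ m, ω t = ω' t) → f ω = f ω') :
    ∫ ω, f ω ∂(Pr i) = PS P i m f := by
  haveI := hPr.1 i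
  set c : (Fin (m + 1) → Fin n) → ℝ := fun x => f (pext m x) with hcdef
  have hdec := f_decomp m f c (fun x => rfl) hf
  calc ∫ ω, f ω ∂(Pr i)
      = ∫ ω, ∑ x : Fin (m + 1) → Fin n, (Cyl m x).indicator (fun _ => c x) ω ∂(Pr i) :=
        integral_congr_ae (Filter.Eventually.of_forall hdec)
    _ = ∑ x : Fin (m + 1) → Fin n, ∫ ω, (Cyl m x).indicator (fun _ => c x) ω ∂(Pr i) :=
        integral_finset_sum _ fun x _ => (integrable_const (c x)).indicator (measurableSet_Cyl m x)
    _ = ∑ x : Fin (m + 1) → Fin n, (Pr i (Cyl m x)).toReal • c x := by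
        simp_rw [integral_indicator_const _ (measurableSet_Cyl m _), measureReal_def]
    _ = PS P i m f := by
        simp only [toReal_Cyl hPr, smul_eq_mul, PS, hcdef]

lemma lintegral_eq_sum {P : Matrix (Fin n) (Fin n) ℝ} {Pr : Fin n → Measure (ℕ → Fin n)}
    (hPr : IsMarkovFamily P Pr) (i : Fin n) (m : ℕ) (f : (ℕ → Fin n) → ℝ≥0∞)
    (hf : ∀ ω ω', (∀ t ≤ m, ω t = ω' t) → f ω = f ω') :
    ∫⁻ ω, f ω ∂(Pr i)
      = ∑ x : Fin (m + 1) → Fin n, ENNReal.ofReal (wt P i m (pext m x)) * f (pext m x) := by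
  haveI := hPr.1 i
  set c : (Fin (m + 1) → Fin n) → ℝ≥0∞ := fun x => f (pext m x) with hcdef
  have hdec := f_decomp m f c (fun x => rfl) hf
  calc ∫⁻ ω, f ω ∂(Pr i)
      = ∫⁻ ω, ∑ x : Fin (m + 1) → Fin n, (Cyl m x).indicator (fun _ => c x) ω ∂(Pr i) :=
        lintegral_congr hdec
    _ = ∑ x : Fin (m + 1) → Fin n, ∫⁻ ω, (Cyl m x).indicator (fun _ => c x) ω ∂(Pr i) :=
        lintegral_finset_sum _ fun x _ => (measurable_const).indicator (measurableSet_Cyl m x)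
    _ = ∑ x : Fin (m + 1) → Fin n, c x * Pr i (Cyl m x) := by
        simp_rw [lintegral_indicator_const (measurableSet_Cyl m _)]
    _ = _ := by
        refine Finset.sum_congr rfl fun x _ => ?_
        rw [← ENNReal.ofReal_toReal (measure_ne_top (Pr i) (Cyl m x)), toReal_Cyl hPr,
          mul_comm]


/-- modify a path after time `m`. -/
def setA (m : ℕ) (ω : ℕ → Fin n) (j : Fin n) : ℕ → Fin n :=
  fun t => if t ≤ m then ω t else j

lemma setA_le {m t : ℕ} (ht : t ≤ m) (ω : ℕ → Fin n) (j : Fin n) : setA m ω j t = ω t :=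
  if_pos ht

lemma setA_gt {m t : ℕ} (ht : m < t) (ω : ℕ → Fin n) (j : Fin n) : setA m ω j t = j :=
  if_neg (by omega)

lemma pext_snoc (m : ℕ) (y : Fin (m + 1) → Fin n) (j : Fin n) :
    pext (m + 1) (Fin.snoc y j) = setA m (pext m y) j := by
  funext t
  rcases le_or_gt t m with h | h
  · rw [setA_le h, pext_apply _ _ (h.trans (Nat.le_succ m)), pext_apply _ _ h]
    have : (⟨t, Nat.lt_succ_of_le (h.trans (Nat.le_succ m))⟩ : Fin (m + 2))
        = Fin.castSucc ⟨t, Nat.lt_succ_of_le h⟩ := rfl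
    rw [this, Fin.snoc_castSucc]
  · rw [setA_gt h]
    have hmin : min t (m + 1) = m + 1 := Nat.min_eq_right h
    have : (⟨min t (m + 1), Nat.lt_succ_of_le (min_le_right _ _)⟩ : Fin (m + 2))
        = Fin.last (m + 1) := Fin.ext (by simpa using hmin)
    rw [pext, this, Fin.snoc_last]

lemma wt_setA (P : Matrix (Fin n) (Fin n) ℝ) (i : Fin n) (m : ℕ) (ω : ℕ → Fin n) (j : Fin n) :
    wt P i (m + 1) (setA m ω j) = wt P i m ω * P (ω m) j := by
  unfold wt
  rw [Finset.prod_range_succ]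
  have h0 : setA m ω j 0 = ω 0 := setA_le (Nat.zero_le m) ω j
  have hm : setA m ω j m = ω m := setA_le le_rfl ω j
  have hm1 : setA m ω j (m + 1) = j := setA_gt (Nat.lt_succ_self m) ω j
  have hprod : ∏ t ∈ Finset.range m, P (setA m ω j t) (setA m ω j (t + 1))
      = ∏ t ∈ Finset.range m, P (ω t) (ω (t + 1)) := by
    refine Finset.prod_congr rfl fun t ht => ?_
    have ht' := Finset.mem_range.mp ht
    rw [setA_le (by omega) ω j, setA_le (by omega) ω j]
  rw [h0, hm, hm1, hprod]; ring

lemma PS_succ (P : Matrix (Fin n) (Fin n) ℝ) (i : Fin n) (m : ℕ) (f : (ℕ → Fin n) → ℝ) :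
    PS P i (m + 1) f = PS P i m (fun ω => ∑ j, P (ω m) j * f (setA m ω j)) := by
  unfold PS
  rw [← (Fin.snocEquiv (fun _ : Fin (m + 2) => Fin n)).sum_comp, Fintype.sum_prod_type]
  rw [Finset.sum_comm]
  refine Finset.sum_congr rfl fun y _ => ?_
  rw [Finset.mul_sum]
  refine Finset.sum_congr rfl fun j _ => ?_
  have he : Fin.snocEquiv (fun _ : Fin (m + 2) => Fin n) (j, y) = Fin.snoc y j := rfl
  rw [he, pext_snoc, wt_setA]; ring

/-- prepend a state to a path. -/
def shiftIn (a : Fin n) (ω : ℕ → Fin n) : ℕ → Fin n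
  | 0 => a
  | t + 1 => ω t

lemma pext_cons (m : ℕ) (a : Fin n) (y : Fin (m + 1) → Fin n) :
    pext (m + 1) (Fin.cons a y) = shiftIn a (pext m y) := by
  funext t
  cases t with
  | zero =>
      have : (⟨min 0 (m + 1), Nat.lt_succ_of_le (min_le_right _ _)⟩ : Fin (m + 2)) = 0 :=
        Fin.ext (by simp)
      rw [pext, this, Fin.cons_zero]; rfl
  | succ t =>
      have hmin : min (t + 1) (m + 1) = min t m + 1 := Nat.succ_min_succ t m
      have : (⟨min (t + 1) (m + 1), Nat.lt_succ_of_le (min_le_right _ _)⟩ : Fin (m + 2))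
          = Fin.succ ⟨min t m, Nat.lt_succ_of_le (min_le_right _ _)⟩ := Fin.ext (by simpa using hmin)
      rw [pext, this, Fin.cons_succ]; rfl

lemma PS_cons (P : Matrix (Fin n) (Fin n) ℝ) (i : Fin n) (m : ℕ) (f : (ℕ → Fin n) → ℝ) :
    PS P i (m + 1) f = ∑ j, P i j * PS P j m (fun ω => f (shiftIn i ω)) := by
  unfold PS
  rw [← (Fin.consEquiv (fun _ : Fin (m + 2) => Fin n)).sum_comp, Fintype.sum_prod_type]
  have key : ∀ a (y : Fin (m + 1) → Fin n),
      wt P i (m + 1) (pext (m + 1) (Fin.consEquiv _ (a, y)))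
        * f (pext (m + 1) (Fin.consEquiv _ (a, y)))
      = (if a = i then 1 else 0) * (P a (pext m y 0)
          * ∏ t ∈ Finset.range m, P (pext m y t) (pext m y (t + 1)))
          * f (shiftIn a (pext m y)) := by
    intro a y
    have he : Fin.consEquiv (fun _ : Fin (m + 2) => Fin n) (a, y) = Fin.cons a y := rfl
    rw [he, pext_cons]
    unfold wt
    rw [Finset.prod_range_succ']
    have h0 : shiftIn a (pext m y) 0 = a := rfl
    have hs : ∀ t, shiftIn a (pext m y) (t + 1) = pext m y t := fun t => rfl
    simp only [h0, hs]
    ring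
  simp only [key]
  -- LHS: sum over a; only a = i survives
  rw [Finset.sum_comm]
  have : ∀ y : Fin (m + 1) → Fin n,
      (∑ a, (if a = i then 1 else 0) * (P a (pext m y 0)
          * ∏ t ∈ Finset.range m, P (pext m y t) (pext m y (t + 1)))
          * f (shiftIn a (pext m y)))
      = P i (pext m y 0) * (∏ t ∈ Finset.range m, P (pext m y t) (pext m y (t + 1)))
          * f (shiftIn i (pext m y)) := by
    intro y
    rw [Fintype.sum_eq_single i]
    · simp
    · intro a ha; simp [ha]
  simp only [this]
  -- RHS
  have rhs : ∀ j : Fin n, P i j * ∑ y : Fin (m + 1) → Fin n,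
      wt P j m (pext m y) * f (shiftIn i (pext m y))
      = ∑ y : Fin (m + 1) → Fin n,
          P i j * (wt P j m (pext m y) * f (shiftIn i (pext m y))) :=
    fun j => Finset.mul_sum _ _ _
  simp only [rhs]
  rw [Finset.sum_comm]
  refine Finset.sum_congr rfl fun y _ => ?_
  unfold wt
  rw [Fintype.sum_eq_single (pext m y 0)]
  · simp [mul_assoc, mul_comm, mul_left_comm]
  · intro a ha
    simp [ha.symm]


lemma wt_nonneg {P : Matrix (Fin n) (Fin n) ℝ} (hP : IsStochastic P) (i : Fin n) (m : ℕ)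
    (ω : ℕ → Fin n) : 0 ≤ wt P i m ω := by
  unfold wt
  refine mul_nonneg (by positivity) (Finset.prod_nonneg fun t _ => hP.1 _ _)

lemma PS_mono {P : Matrix (Fin n) (Fin n) ℝ} (hP : IsStochastic P) (i : Fin n) (m : ℕ)
    {f g : (ℕ → Fin n) → ℝ} (h : ∀ ω, f ω ≤ g ω) : PS P i m f ≤ PS P i m g :=
  Finset.sum_le_sum fun x _ => mul_le_mul_of_nonneg_left (h _) (wt_nonneg hP i m _)

lemma PS_nonneg {P : Matrix (Fin n) (Fin n) ℝ} (hP : IsStochastic P) (i : Fin n) (m : ℕ)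
    {f : (ℕ → Fin n) → ℝ} (h : ∀ ω, 0 ≤ f ω) : 0 ≤ PS P i m f := by
  have := PS_mono hP i m (f := fun _ => (0:ℝ)) (g := f) h
  simpa [PS] using this

lemma PS_congr (P : Matrix (Fin n) (Fin n) ℝ) (i : Fin n) (m : ℕ)
    {f g : (ℕ → Fin n) → ℝ} (h : ∀ ω, ω 0 = i → f ω = g ω) : PS P i m f = PS P i m g := by
  unfold PS
  refine Finset.sum_congr rfl fun x _ => ?_
  by_cases h0 : pext m x 0 = i
  · rw [h _ h0]
  · unfold wt
    rw [if_neg h0]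
    ring

lemma PS_sum {γ : Type*} (P : Matrix (Fin n) (Fin n) ℝ) (i : Fin n) (m : ℕ)
    (s : Finset γ) (F : γ → (ℕ → Fin n) → ℝ) :
    PS P i m (fun ω => ∑ t ∈ s, F t ω) = ∑ t ∈ s, PS P i m (F t) := by
  unfold PS
  rw [Finset.sum_comm]
  exact Finset.sum_congr rfl fun x _ => by rw [Finset.mul_sum]

lemma PS_smul (P : Matrix (Fin n) (Fin n) ℝ) (i : Fin n) (m : ℕ)
    (c : ℝ) (f : (ℕ → Fin n) → ℝ) :
    PS P i m (fun ω => c * f ω) = c * PS P i m f := by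
  unfold PS
  rw [Finset.mul_sum]
  exact Finset.sum_congr rfl fun x _ => by ring

lemma PS_zero (P : Matrix (Fin n) (Fin n) ℝ) (i : Fin n) (f : (ℕ → Fin n) → ℝ) :
    PS P i 0 f = f (fun _ => i) := by
  unfold PS
  rw [Fintype.sum_eq_single (fun _ : Fin 1 => i)]
  · have h1 : pext 0 (fun _ : Fin 1 => i) = fun _ => i := rfl
    rw [h1]
    simp [wt]
  · intro x hx
    have h0 : pext 0 x 0 ≠ i := by
      intro h
      apply hx
      funext t
      have : t = (0 : Fin 1) := Subsingleton.elim _ _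
      rw [this]
      have := pext_apply 0 x (le_refl 0)
      rw [← h, this]
      rfl
    unfold wt
    rw [if_neg h0]
    ring

lemma PS_of_le {P : Matrix (Fin n) (Fin n) ℝ} (hP : IsStochastic P) (i : Fin n)
    {m m' : ℕ} (h : m' ≤ m) (f : (ℕ → Fin n) → ℝ)
    (hf : ∀ ω ω', (∀ t ≤ m', ω t = ω' t) → f ω = f ω') :
    PS P i m f = PS P i m' f := by
  induction m with
  | zero => rw [Nat.le_zero.mp h]
  | succ m ih =>
      rcases eq_or_lt_of_le h with h' | h'
      · rw [← h']
      · have hm : m' ≤ m := Nat.lt_succ_iff.mp h'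
        rw [← ih hm]
        rw [PS_succ]
        refine Finset.sum_congr rfl fun x _ => ?_
        congr 1
        have : ∀ j, f (setA m (pext (m) x) j) = f (pext m x) := by
          intro j
          refine hf _ _ fun t ht => ?_
          exact setA_le (ht.trans hm) _ _
        simp only [this]
        rw [← Finset.sum_mul, hP.2, one_mul]

lemma stopped_congr (D : Finset (Fin n)) {ω ω' : ℕ → Fin n} :
    ∀ {t : ℕ}, (∀ s ≤ t, ω s = ω' s) → stopped D ω t = stopped D ω' t := by
  intro t
  induction t with
  | zero => intro h; exact h 0 le_rfl
  | succ t ih =>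
      intro h
      have h1 : stopped D ω t = stopped D ω' t := ih fun s hs => h s (hs.trans (Nat.le_succ t))
      show (if stopped D ω t ∈ D then ω (t + 1) else stopped D ω t) = _
      rw [h1, h (t + 1) le_rfl]
      rfl

lemma stopped_eq_of_mem (D : Finset (Fin n)) (ω : ℕ → Fin n) :
    ∀ t, stopped D ω t ∈ D → stopped D ω t = ω t := by
  intro t
  induction t with
  | zero => intro _; rfl
  | succ t ih =>
      intro h
      by_cases hD : stopped D ω t ∈ D
      · show (if stopped D ω t ∈ D then ω (t + 1) else stopped D ω t) = ω (t + 1)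
        rw [if_pos hD]
      · exfalso
        apply hD
        have : stopped D ω (t + 1) = stopped D ω t := by
          show (if stopped D ω t ∈ D then ω (t + 1) else stopped D ω t) = _
          rw [if_neg hD]
        rw [← this]
        exact h

/-- one-step transition of the stopped chain. -/
lemma onestep {P : Matrix (Fin n) (Fin n) ℝ} (hP : IsStochastic P) (D : Finset (Fin n))
    (F : Fin n → ℝ) (ω : ℕ → Fin n) (t : ℕ) :
    (∑ j, P (ω t) j * F (if stopped D ω t ∈ D then j else stopped D ω t))
      = ∑ j, stopMat P D (stopped D ω t) j * F j := by
  by_cases hD : stopped D ω t ∈ D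
  · have hω : stopped D ω t = ω t := stopped_eq_of_mem D ω t hD
    have hD' : ω t ∈ D := by rw [← hω]; exact hD
    simp only [if_pos hD, stopMat, hω, if_pos hD']
  · simp only [if_neg hD, stopMat, hD, if_false]
    rw [← Finset.sum_mul, hP.2, one_mul]
    rw [Fintype.sum_eq_single (stopped D ω t)]
    · simp
    · intro j hj
      rw [if_neg fun h => hj h.symm]
      ring

lemma stopped_setA (D : Finset (Fin n)) (ω : ℕ → Fin n) (j : Fin n) (t : ℕ) :
    stopped D (setA t ω j) (t + 1)
      = (if stopped D ω t ∈ D then j else stopped D ω t) := by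
  have h1 : stopped D (setA t ω j) t = stopped D ω t :=
    stopped_congr D fun s hs => setA_le hs ω j
  show (if stopped D (setA t ω j) t ∈ D then setA t ω j (t + 1) else stopped D (setA t ω j) t) = _
  rw [h1, setA_gt (Nat.lt_succ_self t) ω j]

/-- `E_i[Φ(X̂_t)] = (S^t Φ)(i)`. -/
lemma PS_stopped {P : Matrix (Fin n) (Fin n) ℝ} (hP : IsStochastic P) (D : Finset (Fin n))
    (Φ : Fin n → ℝ) (i : Fin n) :
    ∀ t, PS P i t (fun ω => Φ (stopped D ω t)) = ∑ j, (stopMat P D ^ t) i j * Φ j := by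
  intro t
  induction t generalizing Φ i with
  | zero =>
      rw [PS_zero]
      simp [Matrix.one_apply, stopped]
  | succ t ih =>
      rw [PS_succ]
      have key : ∀ ω : ℕ → Fin n,
          (∑ j, P (ω t) j * Φ (stopped D (setA t ω j) (t + 1)))
            = ∑ j, stopMat P D (stopped D ω t) j * Φ j := by
        intro ω
        simp only [stopped_setA]
        exact onestep hP D Φ ω t
      have heq : PS P i t (fun ω => ∑ j, P (ω t) j * Φ (stopped D (setA t ω j) (t + 1)))
          = PS P i t (fun ω => ∑ j, stopMat P D (stopped D ω t) j * Φ j) := by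
        unfold PS
        exact Finset.sum_congr rfl fun x _ =>
          congrArg (fun z => wt P i t (pext t x) * z) (key (pext t x))
      rw [heq, ih (fun l => ∑ j, stopMat P D l j * Φ j) i]
      rw [pow_succ]
      simp only [Matrix.mul_apply, Finset.sum_mul, Finset.mul_sum]
      rw [Finset.sum_comm]
      exact Finset.sum_congr rfl fun l _ => Finset.sum_congr rfl fun j _ => by ring


lemma le_exitT_iff (D : Finset (Fin n)) (ω : ℕ → Fin n) (t : ℕ) :
    (t : ℕ∞) ≤ exitT D ω ↔ ∀ s < t, ω s ∈ D := by
  unfold exitT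
  rw [le_iInf_iff]
  constructor
  · intro H s hs
    by_contra hns
    have h2 := H s
    rw [le_iInf_iff] at h2
    have h3 := h2 hns
    have h4 : t ≤ s := by exact_mod_cast h3
    omega
  · intro H s
    rw [le_iInf_iff]
    intro hns
    rcases le_or_gt t s with h' | h'
    · exact Nat.cast_le.mpr h'
    · exact absurd (H s h') hns

/-- `E_i[R(X_t) 1{t ≤ T}]` as a path sum. -/
def gval (P : Matrix (Fin n) (Fin n) ℝ) (D : Finset (Fin n)) (R : Fin n → ℝ)
    (t : ℕ) (i : Fin n) : ℝ :=
  PS P i t (fun ω => if ∀ s < t, ω s ∈ D then R (ω t) else 0)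

lemma valueE_eq_tsum {P : Matrix (Fin n) (Fin n) ℝ} {Pr : Fin n → Measure (ℕ → Fin n)}
    (hP : IsStochastic P) (hPr : IsMarkovFamily P Pr) (D : Finset (Fin n))
    (R : Fin n → ℝ) (hR : ∀ i, 0 ≤ R i) (i : Fin n) :
    valueE Pr D R i = ∑' t : ℕ, ENNReal.ofReal (gval P D R t i) := by
  unfold valueE
  refine tsum_congr fun t => ?_
  set f : (ℕ → Fin n) → ℝ≥0∞ := fun ω =>
    Set.indicator {ω' : ℕ → Fin n | (t : ℕ∞) ≤ exitT D ω'}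
      (fun ω' => ENNReal.ofReal (R (ω' t))) ω with hfdef
  have hind : ∀ ω, f ω = ENNReal.ofReal (if ∀ s < t, ω s ∈ D then R (ω t) else 0) := by
    intro ω
    rw [hfdef]
    simp only [Set.indicator_apply, Set.mem_setOf_eq]
    by_cases h : ∀ s < t, ω s ∈ D
    · rw [if_pos ((le_exitT_iff D ω t).mpr h), if_pos h]
    · rw [if_neg (fun hmem => h ((le_exitT_iff D ω t).mp hmem)), if_neg h, ENNReal.ofReal_zero]
  have hf : ∀ ω ω', (∀ s ≤ t, ω s = ω' s) → f ω = f ω' := by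
    intro ω ω' hagree
    rw [hind, hind]
    have h1 : (∀ s < t, ω s ∈ D) ↔ (∀ s < t, ω' s ∈ D) := by
      constructor <;> intro H s hs
      · rw [← hagree s hs.le]; exact H s hs
      · rw [hagree s hs.le]; exact H s hs
    have h2 : ω t = ω' t := hagree t le_rfl
    by_cases h : ∀ s < t, ω s ∈ D
    · rw [if_pos h, if_pos (h1.mp h), h2]
    · rw [if_neg h, if_neg (fun H => h (h1.mpr H))]
  rw [lintegral_eq_sum hPr i t f hf]
  have : ∀ x : Fin (t + 1) → Fin n,
      ENNReal.ofReal (wt P i t (pext t x)) * f (pext t x)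
      = ENNReal.ofReal (wt P i t (pext t x)
          * (if ∀ s < t, pext t x s ∈ D then R (pext t x t) else 0)) := by
    intro x
    rw [hind, ENNReal.ofReal_mul (wt_nonneg hP i t _)]
  rw [Finset.sum_congr rfl fun x _ => this x]
  rw [← ENNReal.ofReal_sum_of_nonneg]
  · rfl
  · intro x _
    refine mul_nonneg (wt_nonneg hP i t _) ?_
    by_cases h : ∀ s < t, pext t x s ∈ D
    · rw [if_pos h]; exact hR _
    · rw [if_neg h]

lemma gval_zero (P : Matrix (Fin n) (Fin n) ℝ) (D : Finset (Fin n)) (R : Fin n → ℝ)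
    (i : Fin n) : gval P D R 0 i = R i := by
  unfold gval
  rw [PS_zero]
  exact if_pos fun s hs => absurd hs (Nat.not_lt_zero s)

lemma gval_succ (P : Matrix (Fin n) (Fin n) ℝ) (D : Finset (Fin n)) (R : Fin n → ℝ)
    (t : ℕ) (i : Fin n) :
    gval P D R (t + 1) i = if i ∈ D then ∑ j, P i j * gval P D R t j else 0 := by
  unfold gval
  rw [PS_cons]
  have hcond : ∀ ω : ℕ → Fin n,
      (∀ s < t + 1, shiftIn i ω s ∈ D) ↔ (i ∈ D ∧ ∀ s < t, ω s ∈ D) := by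
    intro ω
    constructor
    · intro H
      exact ⟨H 0 (Nat.succ_pos t), fun s hs => H (s + 1) (by omega)⟩
    · rintro ⟨hi, H⟩ s hs
      cases s with
      | zero => exact hi
      | succ s => exact H s (by omega)
  by_cases hi : i ∈ D
  · rw [if_pos hi]
    refine Finset.sum_congr rfl fun j _ => ?_
    congr 1
    congr 1
    funext ω
    have hsh : shiftIn i ω (t + 1) = ω t := rfl
    by_cases h : ∀ s < t, ω s ∈ D
    · rw [if_pos ((hcond ω).mpr ⟨hi, h⟩), if_pos h, hsh]
    · rw [if_neg (fun H => h ((hcond ω).mp H).2), if_neg h]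
  · rw [if_neg hi]
    have hz : ∀ j : Fin n, PS P j t (fun ω =>
        if ∀ s < t + 1, shiftIn i ω s ∈ D then R (shiftIn i ω (t + 1)) else 0) = 0 := by
      intro j
      have : (fun ω => if ∀ s < t + 1, shiftIn i ω s ∈ D
          then R (shiftIn i ω (t + 1)) else (0:ℝ)) = fun _ => (0:ℝ) :=
        funext fun ω => if_neg fun H => hi ((hcond ω).mp H).1
      rw [this]
      simp [PS]
    simp only [hz, mul_zero, Finset.sum_const_zero]

lemma gval_nonneg {P : Matrix (Fin n) (Fin n) ℝ} (hP : IsStochastic P) (D : Finset (Fin n))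
    {R : Fin n → ℝ} (hR : ∀ i, 0 ≤ R i) (t : ℕ) (i : Fin n) : 0 ≤ gval P D R t i := by
  refine PS_nonneg hP i t fun ω => ?_
  by_cases h : ∀ s < t, ω s ∈ D
  · rw [if_pos h]; exact hR _
  · rw [if_neg h]

/-- the matrix with rows outside `D` zeroed. -/
def QmD (P : Matrix (Fin n) (Fin n) ℝ) (D : Finset (Fin n)) : Matrix (Fin n) (Fin n) ℝ :=
  fun i j => if i ∈ D then P i j else 0

lemma stoch_pow {P : Matrix (Fin n) (Fin n) ℝ} (hP : IsStochastic P) (t : ℕ) :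
    IsStochastic (P ^ t) := by
  induction t with
  | zero =>
      constructor
      · intro i j
        rw [pow_zero, Matrix.one_apply]
        split <;> norm_num
      · intro i
        simp [pow_zero, Matrix.one_apply]
  | succ t ih =>
      constructor
      · intro i j
        rw [pow_succ, Matrix.mul_apply]
        exact Finset.sum_nonneg fun l _ => mul_nonneg (ih.1 i l) (hP.1 l j)
      · intro i
        rw [pow_succ]
        simp only [Matrix.mul_apply]
        rw [Finset.sum_comm]
        have : ∀ l, ∑ j, (P ^ t) i l * P l j = (P ^ t) i l := by
          intro l
          rw [← Finset.mul_sum, hP.2, mul_one]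
        rw [Finset.sum_congr rfl fun l _ => this l, ih.2]

lemma QmD_pow_bounds {P : Matrix (Fin n) (Fin n) ℝ} (hP : IsStochastic P)
    (D : Finset (Fin n)) (t : ℕ) (i j : Fin n) :
    0 ≤ (QmD P D ^ t) i j ∧ (QmD P D ^ t) i j ≤ (P ^ t) i j := by
  induction t generalizing i j with
  | zero =>
      simp only [pow_zero]
      constructor
      · rw [Matrix.one_apply]; split <;> norm_num
      · exact le_rfl
  | succ t ih =>
      rw [pow_succ, pow_succ, Matrix.mul_apply, Matrix.mul_apply]
      constructor
      · refine Finset.sum_nonneg fun l _ => mul_nonneg (ih i l).1 ?_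
        unfold QmD; split
        · exact hP.1 l j
        · exact le_rfl
      · refine Finset.sum_le_sum fun l _ => ?_
        refine mul_le_mul (ih i l).2 ?_ ?_ ((stoch_pow hP t).1 i l)
        · unfold QmD; split
          · exact le_rfl
          · exact hP.1 l j
        · unfold QmD; split
          · exact hP.1 l j
          · exact le_rfl

lemma QmD_rowsum {P : Matrix (Fin n) (Fin n) ℝ} (hP : IsStochastic P)
    (D : Finset (Fin n)) (i : Fin n) :
    ∑ j, QmD P D i j = if i ∈ D then 1 else 0 := by
  unfold QmD
  by_cases h : i ∈ D <;> simp [h, hP.2 i]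

/-- survival mass. -/
lemma hval_eq_rowsum {P : Matrix (Fin n) (Fin n) ℝ} (hP : IsStochastic P)
    (D : Finset (Fin n)) (t : ℕ) (i : Fin n) :
    gval P D (fun _ => 1) t i = ∑ j, (QmD P D ^ t) i j := by
  induction t generalizing i with
  | zero =>
      rw [gval_zero]
      simp [pow_zero, Matrix.one_apply]
  | succ t ih =>
      rw [gval_succ, pow_succ']
      simp only [Matrix.mul_apply]
      rw [Finset.sum_comm]
      have : ∀ j, ∑ l, QmD P D i j * (QmD P D ^ t) j l
          = QmD P D i j * gval P D (fun _ => 1) t j := by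
        intro j
        rw [← Finset.mul_sum, ih j]
      rw [Finset.sum_congr rfl fun j _ => this j]
      unfold QmD
      by_cases h : i ∈ D
      · simp only [h, if_true]
      · simp only [h, if_false, zero_mul, Finset.sum_const_zero]

lemma hval_nonneg {P : Matrix (Fin n) (Fin n) ℝ} (hP : IsStochastic P)
    (D : Finset (Fin n)) (t : ℕ) (i : Fin n) : 0 ≤ gval P D (fun _ => 1) t i :=
  gval_nonneg hP D (fun _ => zero_le_one) t i

lemma hval_le_one {P : Matrix (Fin n) (Fin n) ℝ} (hP : IsStochastic P)
    (D : Finset (Fin n)) (t : ℕ) (i : Fin n) : gval P D (fun _ => 1) t i ≤ 1 := by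
  induction t generalizing i with
  | zero => rw [gval_zero]
  | succ t ih =>
      rw [gval_succ]
      split
      · calc ∑ j, P i j * gval P D (fun _ => 1) t j
            ≤ ∑ j, P i j * 1 :=
              Finset.sum_le_sum fun j _ => mul_le_mul_of_nonneg_left (ih j) (hP.1 i j)
          _ = 1 := by simp [hP.2 i]
      · exact zero_le_one

lemma hval_succ_le {P : Matrix (Fin n) (Fin n) ℝ} (hP : IsStochastic P)
    (D : Finset (Fin n)) (t : ℕ) (i : Fin n) :
    gval P D (fun _ => 1) (t + 1) i ≤ gval P D (fun _ => 1) t i := by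
  induction t generalizing i with
  | zero =>
      rw [gval_succ, gval_zero]
      split
      · calc ∑ j, P i j * gval P D (fun _ => 1) 0 j
            ≤ ∑ j, P i j * 1 := Finset.sum_le_sum fun j _ =>
              mul_le_mul_of_nonneg_left (by rw [gval_zero]) (hP.1 i j)
          _ = 1 := by simp [hP.2 i]
      · exact zero_le_one
  | succ t ih =>
      rw [gval_succ, gval_succ]
      split
      · exact Finset.sum_le_sum fun j _ => mul_le_mul_of_nonneg_left (ih j) (hP.1 i j)
      · exact le_rfl

lemma hval_antitone {P : Matrix (Fin n) (Fin n) ℝ} (hP : IsStochastic P)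
    (D : Finset (Fin n)) {s t : ℕ} (h : s ≤ t) (i : Fin n) :
    gval P D (fun _ => 1) t i ≤ gval P D (fun _ => 1) s i := by
  induction t with
  | zero => rw [Nat.le_zero.mp h]
  | succ t ih =>
      rcases eq_or_lt_of_le h with h' | h'
      · rw [← h']
      · exact (hval_succ_le hP D t i).trans (ih (Nat.lt_succ_iff.mp h'))

lemma hval_add {P : Matrix (Fin n) (Fin n) ℝ} (hP : IsStochastic P)
    (D : Finset (Fin n)) (a b : ℕ) (i : Fin n) :
    gval P D (fun _ => 1) (a + b) i
      = ∑ j, (QmD P D ^ a) i j * gval P D (fun _ => 1) b j := by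
  rw [hval_eq_rowsum hP, pow_add]
  simp only [Matrix.mul_apply]
  rw [Finset.sum_comm]
  refine Finset.sum_congr rfl fun j _ => ?_
  rw [hval_eq_rowsum hP, ← Finset.mul_sum]

lemma hval_exit_bound {P : Matrix (Fin n) (Fin n) ℝ} (hP : IsStochastic P)
    (D : Finset (Fin n)) {j0 : Fin n} (hj0 : j0 ∉ D) (m : ℕ) (i : Fin n) :
    gval P D (fun _ => 1) (m + 1) i ≤ 1 - (P ^ m) i j0 := by
  rw [hval_eq_rowsum hP]
  have step1 : ∑ l, (QmD P D ^ (m + 1)) i l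
      = ∑ j, (QmD P D ^ m) i j * (if j ∈ D then 1 else 0) := by
    rw [pow_succ]
    simp only [Matrix.mul_apply]
    rw [Finset.sum_comm]
    refine Finset.sum_congr rfl fun j _ => ?_
    rw [← Finset.mul_sum, QmD_rowsum hP]
  rw [step1]
  have step2 : ∑ j, (QmD P D ^ m) i j * (if j ∈ D then 1 else 0)
      ≤ ∑ j, (P ^ m) i j * (if j = j0 then 0 else 1) := by
    refine Finset.sum_le_sum fun j _ => ?_
    by_cases hj : j ∈ D
    · have hne : j ≠ j0 := fun h => hj0 (h ▸ hj)
      rw [if_pos hj, if_neg hne, mul_one, mul_one]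
      exact (QmD_pow_bounds hP D m i j).2
    · rw [if_neg hj, mul_zero]
      refine mul_nonneg ((stoch_pow hP m).1 i j) ?_
      split <;> norm_num
  refine step2.trans ?_
  have : ∀ j, (P ^ m) i j * (if j = j0 then 0 else 1)
      = (P ^ m) i j - (if j = j0 then (P ^ m) i j0 else 0) := by
    intro j
    by_cases h : j = j0
    · subst h; simp
    · simp [h]
  rw [Finset.sum_congr rfl fun j _ => this j, Finset.sum_sub_distrib,
    (stoch_pow hP m).2 i, Finset.sum_ite_eq' Finset.univ j0 (fun _ => (P ^ m) i j0)]
  simp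

lemma gval_le_hval {P : Matrix (Fin n) (Fin n) ℝ} (hP : IsStochastic P)
    (D : Finset (Fin n)) {R : Fin n → ℝ}
    {Rmax : ℝ} (hRmax : ∀ i, R i ≤ Rmax) (t : ℕ) (i : Fin n) :
    gval P D R t i ≤ Rmax * gval P D (fun _ => 1) t i := by
  induction t generalizing i with
  | zero => rw [gval_zero, gval_zero, mul_one]; exact hRmax i
  | succ t ih =>
      rw [gval_succ, gval_succ]
      split
      · rw [Finset.mul_sum]
        refine Finset.sum_le_sum fun j _ => ?_
        calc P i j * gval P D R t j ≤ P i j * (Rmax * gval P D (fun _ => 1) t j) :=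
              mul_le_mul_of_nonneg_left (ih j) (hP.1 i j)
          _ = Rmax * (P i j * gval P D (fun _ => 1) t j) := by ring
      · rw [mul_zero]

lemma summable_gval {P : Matrix (Fin n) (Fin n) ℝ} (hP : IsStochastic P)
    (hirr : IsIrreducible P) {D : Finset (Fin n)} (hDne : D ≠ Finset.univ)
    (hpos : 0 < n) {R : Fin n → ℝ} (hR : ∀ i, 0 ≤ R i) (i : Fin n) :
    Summable (fun t => gval P D R t i) := by
  haveI : Nonempty (Fin n) := ⟨⟨0, hpos⟩⟩
  have hne : (Finset.univ : Finset (Fin n)).Nonempty := Finset.univ_nonempty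
  obtain ⟨j0, hj0⟩ : ∃ j0, j0 ∉ D := by
    by_contra h
    push_neg at h
    exact hDne (Finset.eq_univ_iff_forall.mpr h)
  choose mfun hm1 hm2 using fun a => hirr a j0
  set M : ℕ := 1 + ∑ a, mfun a with hM
  have hM0 : 0 < M := by omega
  have hMge : ∀ a, mfun a + 1 ≤ M := by
    intro a
    have : mfun a ≤ ∑ a, mfun a :=
      Finset.single_le_sum (fun a _ => Nat.zero_le _) (Finset.mem_univ a)
    omega
  set hv : ℕ → Fin n → ℝ := gval P D (fun _ => 1) with hhv
  set H : ℕ → ℝ := fun t => Finset.univ.sup' hne (fun a => hv t a) with hH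
  have hle_H : ∀ t a, hv t a ≤ H t := fun t a => Finset.le_sup' _ (Finset.mem_univ a)
  have hH_nonneg : ∀ t, 0 ≤ H t := fun t => le_trans (hval_nonneg hP D t i) (hle_H t i)
  have hH_le_one : ∀ t, H t ≤ 1 := fun t => Finset.sup'_le _ _ fun a _ => hval_le_one hP D t a
  set c : ℝ := H M with hc
  have hc1 : c < 1 := by
    rw [hc, hH, Finset.sup'_lt_iff]
    intro a _
    calc hv M a ≤ hv (mfun a + 1) a := hval_antitone hP D (hMge a) a
      _ ≤ 1 - (P ^ mfun a) a j0 := hval_exit_bound hP D hj0 (mfun a) a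
      _ < 1 := by have := hm2 a; linarith
  have hc0 : 0 ≤ c := hH_nonneg M
  have hsub : ∀ t, H (M + t) ≤ c * H t := by
    intro t
    refine Finset.sup'_le _ _ fun a _ => ?_
    calc hv (M + t) a = ∑ l, (QmD P D ^ M) a l * hv t l := hval_add hP D M t a
      _ ≤ ∑ l, (QmD P D ^ M) a l * H t := Finset.sum_le_sum fun l _ =>
          mul_le_mul_of_nonneg_left (hle_H t l) (QmD_pow_bounds hP D M a l).1
      _ = (∑ l, (QmD P D ^ M) a l) * H t := by rw [Finset.sum_mul]
      _ = hv M a * H t := by rw [← hval_eq_rowsum hP]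
      _ ≤ c * H t := mul_le_mul_of_nonneg_right (hle_H M a) (hH_nonneg t)
  have hgeo : ∀ t, H t ≤ c ^ (t / M) := by
    intro t
    induction t using Nat.strong_induction_on with
    | _ t ih =>
      rcases lt_or_ge t M with h | h
      · rw [Nat.div_eq_of_lt h, pow_zero]
        exact hH_le_one t
      · have ht : t = M + (t - M) := by omega
        have hdiv : t / M = (t - M) / M + 1 := by
          conv_lhs => rw [ht, Nat.add_comm]
          rw [Nat.add_div_right _ hM0]
        rw [hdiv, pow_succ]
        calc H t = H (M + (t - M)) := by rw [← ht]
          _ ≤ c * H (t - M) := hsub _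
          _ ≤ c * c ^ ((t - M) / M) :=
            mul_le_mul_of_nonneg_left (ih _ (by omega)) hc0
          _ = c ^ ((t - M) / M) * c := mul_comm _ _
  have hsummaj : Summable (fun t : ℕ => c ^ (t / M)) := by
    haveI : NeZero M := ⟨by omega⟩
    have h1 : Summable (fun s : ℕ => c ^ s) := summable_geometric_of_lt_one hc0 hc1
    have h2 : Summable (fun _ : Fin M => (1 : ℝ)) := Summable.of_finite
    have h3 : Summable (fun p : ℕ × Fin M => c ^ p.1 * 1) :=
      h1.mul_of_nonneg h2 (fun s => pow_nonneg hc0 s) (fun _ => zero_le_one)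
    have h4 : Summable ((fun p : ℕ × Fin M => c ^ p.1 * 1) ∘ (Nat.divModEquiv M)) :=
      ((Nat.divModEquiv M).summable_iff).mpr h3
    refine h4.congr fun t => ?_
    simp [Function.comp, Nat.divModEquiv]
  set Rmax : ℝ := Finset.univ.sup' hne R with hRm
  have hRmax : ∀ a, R a ≤ Rmax := fun a => Finset.le_sup' _ (Finset.mem_univ a)
  have hRm0 : 0 ≤ Rmax := le_trans (hR i) (hRmax i)
  refine Summable.of_nonneg_of_le (fun t => gval_nonneg hP D hR t i)
    (fun t => ?_) (hsummaj.mul_left Rmax)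
  calc gval P D R t i ≤ Rmax * hv t i := gval_le_hval hP D hRmax t i
    _ ≤ Rmax * H t := mul_le_mul_of_nonneg_left (hle_H t i) hRm0
    _ ≤ Rmax * c ^ (t / M) := mul_le_mul_of_nonneg_left (hgeo t) hRm0

lemma valueR_eq_tsum {P : Matrix (Fin n) (Fin n) ℝ} {Pr : Fin n → Measure (ℕ → Fin n)}
    (hP : IsStochastic P) (hPr : IsMarkovFamily P Pr) (hirr : IsIrreducible P)
    {D : Finset (Fin n)} (hDne : D ≠ Finset.univ) (hpos : 0 < n)
    {R : Fin n → ℝ} (hR : ∀ i, 0 ≤ R i) (i : Fin n) :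
    valueR Pr D R i = ∑' t, gval P D R t i := by
  unfold valueR
  rw [valueE_eq_tsum hP hPr D R hR i,
    ← ENNReal.ofReal_tsum_of_nonneg (fun t => gval_nonneg hP D hR t i)
      (summable_gval hP hirr hDne hpos hR i),
    ENNReal.toReal_ofReal (tsum_nonneg fun t => gval_nonneg hP D hR t i)]

lemma poisson {P : Matrix (Fin n) (Fin n) ℝ} {Pr : Fin n → Measure (ℕ → Fin n)}
    (hP : IsStochastic P) (hPr : IsMarkovFamily P Pr) (hirr : IsIrreducible P)
    {D : Finset (Fin n)} (hDne : D ≠ Finset.univ) (hpos : 0 < n)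
    {R : Fin n → ℝ} (hR : ∀ i, 0 ≤ R i) (i : Fin n) :
    valueR Pr D R i = RD D R i + ∑ j, stopMat P D i j * valueR Pr D R j := by
  have hsum : ∀ a, Summable (fun t => gval P D R t a) :=
    fun a => summable_gval hP hirr hDne hpos hR a
  have hval : ∀ a, valueR Pr D R a = ∑' t, gval P D R t a :=
    fun a => valueR_eq_tsum hP hPr hirr hDne hpos hR a
  rw [hval i, Summable.tsum_eq_zero_add (hsum i), gval_zero]
  by_cases hi : i ∈ D
  · simp only [fun t => gval_succ P D R t i, if_pos hi]
    have hswap : ∑' t, ∑ j, P i j * gval P D R t j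
        = ∑ j, P i j * ∑' t, gval P D R t j := by
      rw [Summable.tsum_finsetSum fun j _ => (hsum j).mul_left (P i j)]
      exact Finset.sum_congr rfl fun j _ => tsum_mul_left
    rw [hswap]
    unfold RD
    rw [if_pos hi]
    congr 1
    refine Finset.sum_congr rfl fun j _ => ?_
    rw [hval j]
    unfold stopMat
    rw [if_pos hi]
  · simp only [fun t => gval_succ P D R t i, if_neg hi]
    rw [tsum_zero]
    unfold RD
    rw [if_neg hi]
    have : ∑ j, stopMat P D i j * valueR Pr D R j = valueR Pr D R i := by
      unfold stopMat
      rw [Fintype.sum_eq_single i]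
      · simp [hi]
      · intro j hj
        rw [if_neg hi, if_neg (fun h => hj h.symm), zero_mul]
    rw [this, hval i, Summable.tsum_eq_zero_add (hsum i), gval_zero]
    simp only [fun t => gval_succ P D R t i, if_neg hi]
    rw [tsum_zero]
    ring

lemma PS_zero_fun (P : Matrix (Fin n) (Fin n) ℝ) (i : Fin n) (m : ℕ) :
    PS P i m (fun _ => (0:ℝ)) = 0 := by simp [PS]

lemma var_min (p v : Fin n → ℝ) (hp : ∀ j, 0 ≤ p j) (hs : ∑ j, p j = 1) (c : ℝ) :
    ∑ j, p j * (v j - ∑ l, p l * v l) ^ 2 ≤ ∑ j, p j * (v j - c) ^ 2 := by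
  set m := ∑ l, p l * v l with hm
  have expand : ∀ a : ℝ, ∑ j, p j * (v j - a) ^ 2
      = (∑ j, p j * v j ^ 2) - 2 * a * m + a ^ 2 := by
    intro a
    have h1 : ∀ j, p j * (v j - a) ^ 2
        = p j * v j ^ 2 - 2 * a * (p j * v j) + a ^ 2 * p j := fun j => by ring
    rw [Finset.sum_congr rfl fun j _ => h1 j, Finset.sum_add_distrib, Finset.sum_sub_distrib,
      ← Finset.mul_sum, ← Finset.mul_sum, hs, ← hm]
    ring
  rw [expand m, expand c]
  nlinarith [sq_nonneg (c - m)]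

end Aux

/-- Eq. (28) of the paper, variance decomposition: for `k ∈ D` and `τ ≥ 1`,
`E_k[(∑_{t=0}^{τ-1} R_D(X_{t∧T}) + u(X_{τ∧T}) - u(k))²]
  ≤ ∑_{ℓ≠k} (u(ℓ) - u(k))² ∑_{t=1}^{τ} S^t(k,ℓ)`. -/
theorem stmt13 {n : ℕ} (hn : 2 ≤ n) (D : Finset (Fin n)) (hD : D.Nonempty)
    (hDne : D ≠ Finset.univ)
    (P : Matrix (Fin n) (Fin n) ℝ) (hP : IsStochastic P) (hirr : IsIrreducible P)
    (Pr : Fin n → Measure (ℕ → Fin n)) (hPr : IsMarkovFamily P Pr)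
    (R : Fin n → ℝ) (hR : ∀ i, 0 ≤ R i)
    (τ : ℕ) (hτ : 1 ≤ τ) (k : Fin n) (hk : k ∈ D) :
    (∫ ω, (∑ t ∈ Finset.range τ, RD D R (stopped D ω t)
        + valueR Pr D R (stopped D ω τ) - valueR Pr D R k) ^ 2 ∂(Pr k))
      ≤ ∑ ℓ ∈ ({k}ᶜ : Finset (Fin n)),
          (valueR Pr D R ℓ - valueR Pr D R k) ^ 2 *
            ∑ t ∈ Finset.Icc 1 τ, (stopMat P D ^ t) k ℓ := by
  haveI hpos : 0 < n := by omega
  classical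
  set S := stopMat P D with hS
  set u := valueR Pr D R with hu
  have hpois : ∀ a, u a = RD D R a + ∑ j, S a j * u j := by
    intro a
    rw [hu, hS]
    exact poisson hP hPr hirr hDne hpos hR a
  have honestep : ∀ (F : Fin n → ℝ) (ω : ℕ → Fin n) (t : ℕ),
      (∑ j, P (ω t) j * F (if stopped D ω t ∈ D then j else stopped D ω t))
        = ∑ j, S (stopped D ω t) j * F j := by
    intro F ω t
    rw [hS]
    exact onestep hP D F ω t
  have hPSstop : ∀ (Φ : Fin n → ℝ) (t : ℕ),
      PS P k t (fun ω => Φ (stopped D ω t)) = ∑ j, (S ^ t) k j * Φ j := by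
    intro Φ t
    rw [hS]
    exact PS_stopped hP D Φ k t
  set d : ℕ → (ℕ → Fin n) → ℝ := fun t ω =>
    u (stopped D ω (t + 1)) - ∑ j, S (stopped D ω t) j * u j with hd
  set Ψ : Fin n → ℝ := fun j => (u j - u k) ^ 2 with hΨ
  set f : (ℕ → Fin n) → ℝ := fun ω =>
    (∑ t ∈ Finset.range τ, RD D R (stopped D ω t) + u (stopped D ω τ) - u k) ^ 2 with hf
  have hfdep : ∀ ω ω', (∀ t ≤ τ, ω t = ω' t) → f ω = f ω' := by
    intro ω ω' h
    have hst : ∀ r, r ≤ τ → stopped D ω r = stopped D ω' r := fun r hr =>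
      stopped_congr D fun s hs => h s (hs.trans hr)
    simp only [hf]
    rw [hst τ le_rfl, Finset.sum_congr rfl fun t ht =>
      by rw [hst t (Finset.mem_range.mp ht).le]]
  have hLHS : (∫ ω, (∑ t ∈ Finset.range τ, RD D R (stopped D ω t)
      + u (stopped D ω τ) - u k) ^ 2 ∂(Pr k)) = PS P k τ f :=
    integral_eq_PS hPr k τ f hfdep
  rw [hLHS]
  -- telescoping
  have hstep1 : PS P k τ f = PS P k τ (fun ω => (∑ t ∈ Finset.range τ, d t ω) ^ 2) := by
    refine PS_congr P k τ fun ω h0 => ?_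
    have hone : ∀ t, d t ω
        = RD D R (stopped D ω t) + (u (stopped D ω (t + 1)) - u (stopped D ω t)) := by
      intro t
      have hp := hpois (stopped D ω t)
      simp only [hd]
      linarith
    have htele : ∑ t ∈ Finset.range τ, d t ω
        = (∑ t ∈ Finset.range τ, RD D R (stopped D ω t))
          + (u (stopped D ω τ) - u (stopped D ω 0)) := by
      rw [Finset.sum_congr rfl fun t _ => hone t, Finset.sum_add_distrib,
        Finset.sum_range_sub (fun t => u (stopped D ω t)) τ]
    have h00 : stopped D ω 0 = k := h0
    simp only [hf]
    rw [htele, h00]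
    ring
  rw [hstep1]
  -- expand the square
  have hexp : PS P k τ (fun ω => (∑ t ∈ Finset.range τ, d t ω) ^ 2)
      = ∑ s ∈ Finset.range τ, ∑ t ∈ Finset.range τ,
          PS P k τ (fun ω => d s ω * d t ω) := by
    have h1 : PS P k τ (fun ω => (∑ t ∈ Finset.range τ, d t ω) ^ 2)
        = PS P k τ (fun ω => ∑ s ∈ Finset.range τ, ∑ t ∈ Finset.range τ, d s ω * d t ω) := by
      congr 1
      funext ω
      rw [pow_two, Finset.sum_mul_sum]
    rw [h1, PS_sum]
    exact Finset.sum_congr rfl fun s _ => PS_sum P k τ _ _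
  rw [hexp]
  -- dependence of d on coordinates
  have hd_dep : ∀ (r : ℕ) (ω ω' : ℕ → Fin n), (∀ s ≤ r + 1, ω s = ω' s) → d r ω = d r ω' := by
    intro r ω ω' h
    have h1 : stopped D ω (r + 1) = stopped D ω' (r + 1) := stopped_congr D h
    have h2 : stopped D ω r = stopped D ω' r :=
      stopped_congr D fun s hs => h s (hs.trans (Nat.le_succ r))
    simp only [hd, h1, h2]
  have hdt_setA : ∀ (t : ℕ) (ω : ℕ → Fin n) (j : Fin n), d t (setA t ω j)
      = u (if stopped D ω t ∈ D then j else stopped D ω t)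
        - ∑ l, S (stopped D ω t) l * u l := by
    intro t ω j
    simp only [hd]
    rw [stopped_setA D ω j t, stopped_congr D (fun r (hr : r ≤ t) => setA_le hr ω j)]
  -- cross terms vanish
  have hcross : ∀ s t, s < t → t < τ → PS P k τ (fun ω => d s ω * d t ω) = 0 := by
    intro s t hst htτ
    have hdep : ∀ ω ω', (∀ r ≤ t + 1, ω r = ω' r) → d s ω * d t ω = d s ω' * d t ω' := by
      intro ω ω' h
      rw [hd_dep s ω ω' (fun r hr => h r (by omega)), hd_dep t ω ω' h]
    rw [PS_of_le hP k (show t + 1 ≤ τ by omega) _ hdep, PS_succ]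
    have hz : (fun ω : ℕ → Fin n =>
        ∑ j, P (ω t) j * ((fun ω => d s ω * d t ω) (setA t ω j))) = fun _ => (0:ℝ) := by
      funext ω
      have hds : ∀ j : Fin n, d s (setA t ω j) = d s ω := fun j =>
        hd_dep s _ _ fun r hr => setA_le (by omega) ω j
      simp only [hds, hdt_setA]
      have hone := honestep u ω t
      have hsum1 := hP.2 (ω t)
      have hterm : ∀ j, P (ω t) j * (d s ω
          * (u (if stopped D ω t ∈ D then j else stopped D ω t)
              - ∑ l, S (stopped D ω t) l * u l))
          = d s ω * (P (ω t) j * u (if stopped D ω t ∈ D then j else stopped D ω t))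
            - d s ω * (∑ l, S (stopped D ω t) l * u l) * P (ω t) j := fun j => by ring
      rw [Finset.sum_congr rfl fun j _ => hterm j, Finset.sum_sub_distrib,
        ← Finset.mul_sum, ← Finset.mul_sum, hone, hsum1, mul_one]
      ring
    rw [hz, PS_zero_fun]
  -- diagonal terms
  have hdiag : ∀ t, t < τ →
      PS P k τ (fun ω => d t ω * d t ω) ≤ ∑ j, (S ^ (t + 1)) k j * Ψ j := by
    intro t htτ
    have hdep : ∀ ω ω', (∀ r ≤ t + 1, ω r = ω' r) → d t ω * d t ω = d t ω' * d t ω' := by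
      intro ω ω' h
      rw [hd_dep t ω ω' h]
    rw [PS_of_le hP k (show t + 1 ≤ τ by omega) _ hdep, PS_succ]
    have hb : ∀ ω : ℕ → Fin n,
        (∑ j, P (ω t) j * ((fun ω => d t ω * d t ω) (setA t ω j)))
          ≤ ∑ j, P (ω t) j * Ψ (if stopped D ω t ∈ D then j else stopped D ω t) := by
      intro ω
      simp only [hdt_setA]
      have hmean := honestep u ω t
      have hvm := var_min (P (ω t))
        (fun j => u (if stopped D ω t ∈ D then j else stopped D ω t))
        (hP.1 (ω t)) (hP.2 (ω t)) (u k)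
      rw [hmean] at hvm
      simp only [hΨ]
      calc ∑ j, P (ω t) j * ((u (if stopped D ω t ∈ D then j else stopped D ω t)
              - ∑ l, S (stopped D ω t) l * u l)
            * (u (if stopped D ω t ∈ D then j else stopped D ω t)
              - ∑ l, S (stopped D ω t) l * u l))
          = ∑ j, P (ω t) j * (u (if stopped D ω t ∈ D then j else stopped D ω t)
              - ∑ l, S (stopped D ω t) l * u l) ^ 2 := by
            exact Finset.sum_congr rfl fun j _ => by rw [pow_two]
        _ ≤ ∑ j, P (ω t) j * (u (if stopped D ω t ∈ D then j else stopped D ω t) - u k) ^ 2 :=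
            hvm
    calc PS P k t (fun ω => ∑ j, P (ω t) j * ((fun ω => d t ω * d t ω) (setA t ω j)))
        ≤ PS P k t (fun ω => ∑ j, P (ω t) j
            * Ψ (if stopped D ω t ∈ D then j else stopped D ω t)) := PS_mono hP k t hb
      _ = PS P k t (fun ω => ∑ j, S (stopped D ω t) j * Ψ j) := by
          congr 1
          funext ω
          exact honestep Ψ ω t
      _ = ∑ l, (S ^ t) k l * ∑ j, S l j * Ψ j := hPSstop (fun l => ∑ j, S l j * Ψ j) t
      _ = ∑ j, (S ^ (t + 1)) k j * Ψ j := by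
          rw [pow_succ]
          simp only [Matrix.mul_apply, Finset.sum_mul, Finset.mul_sum]
          rw [Finset.sum_comm]
          exact Finset.sum_congr rfl fun j _ => Finset.sum_congr rfl fun l _ => by ring
  -- assemble
  have hdiagsum : ∑ s ∈ Finset.range τ, ∑ t ∈ Finset.range τ,
      PS P k τ (fun ω => d s ω * d t ω)
      = ∑ t ∈ Finset.range τ, PS P k τ (fun ω => d t ω * d t ω) := by
    refine Finset.sum_congr rfl fun s hs => ?_
    refine Finset.sum_eq_single_of_mem s hs fun t ht hts => ?_
    rcases lt_or_gt_of_ne hts with h | h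
    · have hzz := hcross t s h (Finset.mem_range.mp hs)
      rw [← hzz]
      congr 1
      funext ω
      ring
    · exact hcross s t h (Finset.mem_range.mp ht)
  rw [hdiagsum]
  have hbound : ∑ t ∈ Finset.range τ, PS P k τ (fun ω => d t ω * d t ω)
      ≤ ∑ t ∈ Finset.range τ, ∑ j, (S ^ (t + 1)) k j * Ψ j :=
    Finset.sum_le_sum fun t ht => hdiag t (Finset.mem_range.mp ht)
  refine hbound.trans (le_of_eq ?_)
  -- final reindexing
  rw [Finset.sum_comm]
  have h1 : ∀ j, ∑ t ∈ Finset.range τ, (S ^ (t + 1)) k j * Ψ j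
      = Ψ j * ∑ t ∈ Finset.Icc 1 τ, (S ^ t) k j := by
    intro j
    rw [Finset.mul_sum, show Finset.Icc 1 τ = Finset.Ico 1 (τ + 1) from (Finset.Ico_add_one_right_eq_Icc 1 τ).symm,
      Finset.sum_Ico_eq_sum_range]
    simp only [Nat.add_sub_cancel]
    exact Finset.sum_congr rfl fun t _ => by rw [Nat.add_comm 1 t]; ring
  rw [Finset.sum_congr rfl fun j _ => h1 j]
  rw [← Finset.sum_compl_add_sum {k}
    (fun j => Ψ j * ∑ t ∈ Finset.Icc 1 τ, (S ^ t) k j)]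
  have h2 : ∑ j ∈ ({k} : Finset (Fin n)), Ψ j * ∑ t ∈ Finset.Icc 1 τ, (S ^ t) k j = 0 := by
    rw [Finset.sum_singleton]
    simp [hΨ]
  rw [h2, add_zero]


end RareTD
end
end

section
/- For every i ∈ [n]: if i + 1 ≤ n then P(i,i+1) ≥ 1/(2(1+e)), and if i − 1 ≥ 1 then P(i,i−1) ≥ 1/(2(1+e)), where e is Euler's number. -/
open Finset Filter
open scoped Real

noncomputable section

namespace RareChain

/-- The potential `w(i) = ((n-1)/(4π)) cos(4π(i-1)/(n-1))`. -/
def w (n i : ℕ) : ℝ :=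
  ((n : ℝ) - 1) / (4 * Real.pi) * Real.cos (4 * Real.pi * ((i : ℝ) - 1) / ((n : ℝ) - 1))

/-- The normalizing constant `Z = ∑_{j=1}^n e^{w(j)}`. -/
def Z (n : ℕ) : ℝ := ∑ j ∈ Finset.Icc 1 n, Real.exp (w n j)

/-- The invariant probability vector `p(i) = e^{w(i)} / Z`. -/
def p (n i : ℕ) : ℝ := Real.exp (w n i) / Z n

/-- The nearest-neighbor transition matrix of Section 3 of the paper (indices in `{1,…,n}`,
entries outside read as `0`). -/
def Pmat (n : ℕ) (i j : ℕ) : ℝ :=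
  if i < 1 ∨ n < i ∨ j < 1 ∨ n < j then 0
  else if j = i + 1 then p n (i + 1) / (2 * (p n i + p n (i + 1)))
  else if j + 1 = i then p n (i - 1) / (2 * (p n i + p n (i - 1)))
  else if j = i then
    1 - (if i + 1 ≤ n then p n (i + 1) / (2 * (p n i + p n (i + 1))) else 0)
      - (if 2 ≤ i then p n (i - 1) / (2 * (p n i + p n (i - 1))) else 0)
  else 0

lemma abs_cos_sub_cos (x y : ℝ) : |Real.cos x - Real.cos y| ≤ |x - y| := by
  rw [Real.cos_sub_cos]
  calc |(-2) * Real.sin ((x + y) / 2) * Real.sin ((x - y) / 2)|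
      = 2 * |Real.sin ((x + y) / 2)| * |Real.sin ((x - y) / 2)| := by
        rw [abs_mul, abs_mul]; norm_num
    _ ≤ 2 * 1 * |(x - y) / 2| := by
        apply mul_le_mul
        · exact mul_le_mul_of_nonneg_left (Real.abs_sin_le_one _) (by norm_num)
        · exact Real.abs_sin_le_abs
        · positivity
        · positivity
    _ = |x - y| := by rw [abs_div]; norm_num; ring

lemma Zpos (n : ℕ) (hn : 3 ≤ n) : 0 < Z n := by
  apply Finset.sum_pos (fun j _ => Real.exp_pos _)
  exact ⟨1, by simp; omega⟩

lemma ppos (n : ℕ) (hn : 3 ≤ n) (i : ℕ) : 0 < p n i :=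
  div_pos (Real.exp_pos _) (Zpos n hn)

lemma wdiff (n : ℕ) (hn : 3 ≤ n) (i j : ℕ) (hij : |(i : ℝ) - j| ≤ 1) :
    w n i - w n j ≤ 1 := by
  have hn1 : (2 : ℝ) ≤ (n : ℝ) - 1 := by
    have : (3 : ℝ) ≤ (n : ℝ) := by exact_mod_cast hn
    linarith
  have hπ : 0 < Real.pi := Real.pi_pos
  have hc : 0 ≤ ((n : ℝ) - 1) / (4 * Real.pi) := by positivity
  have key : |Real.cos (4 * Real.pi * ((i : ℝ) - 1) / ((n : ℝ) - 1)) -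
      Real.cos (4 * Real.pi * ((j : ℝ) - 1) / ((n : ℝ) - 1))| ≤
      4 * Real.pi / ((n : ℝ) - 1) := by
    refine le_trans (abs_cos_sub_cos _ _) ?_
    have heq : 4 * Real.pi * ((i : ℝ) - 1) / ((n : ℝ) - 1) -
        4 * Real.pi * ((j : ℝ) - 1) / ((n : ℝ) - 1)
        = 4 * Real.pi / ((n : ℝ) - 1) * ((i : ℝ) - j) := by
      field_simp
      ring
    rw [heq, abs_mul, abs_of_pos (by positivity : (0:ℝ) < 4 * Real.pi / ((n : ℝ) - 1))]
    calc 4 * Real.pi / ((n : ℝ) - 1) * |(i : ℝ) - j|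
        ≤ 4 * Real.pi / ((n : ℝ) - 1) * 1 :=
          mul_le_mul_of_nonneg_left hij (by positivity)
      _ = 4 * Real.pi / ((n : ℝ) - 1) := by ring
  have h1 : w n i - w n j ≤ ((n : ℝ) - 1) / (4 * Real.pi) * (4 * Real.pi / ((n : ℝ) - 1)) := by
    unfold w
    rw [← mul_sub]
    calc ((n : ℝ) - 1) / (4 * Real.pi) * (Real.cos _ - Real.cos _)
        ≤ ((n : ℝ) - 1) / (4 * Real.pi) * |Real.cos _ - Real.cos _| :=
          mul_le_mul_of_nonneg_left (le_abs_self _) hc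
      _ ≤ _ := mul_le_mul_of_nonneg_left key hc
  have h2 : ((n : ℝ) - 1) / (4 * Real.pi) * (4 * Real.pi / ((n : ℝ) - 1)) = 1 := by
    field_simp
  linarith

lemma main_bound (n : ℕ) (hn : 3 ≤ n) (i j : ℕ) (hij : |(i : ℝ) - j| ≤ 1) :
    1 / (2 * (1 + Real.exp 1)) ≤ p n j / (2 * (p n i + p n j)) := by
  have hpi := ppos n hn i
  have hpj := ppos n hn j
  have he : 0 < 1 + Real.exp 1 := by positivity
  have hA : (0:ℝ) < 2 * (1 + Real.exp 1) := by positivity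
  have hB : (0:ℝ) < 2 * (p n i + p n j) := by
    have : (0:ℝ) < p n i + p n j := add_pos hpi hpj
    linarith
  rw [div_le_div_iff₀ hA hB]
  have hkey : p n i ≤ Real.exp 1 * p n j := by
    unfold p
    rw [div_le_iff₀ (Zpos n hn)]
    have heq : Real.exp 1 * (Real.exp (w n j) / Z n) * Z n = Real.exp (1 + w n j) := by
      rw [Real.exp_add]
      field_simp
      rw [div_self (Zpos n hn).ne']
    rw [heq]
    exact Real.exp_le_exp.2 (by linarith [wdiff n hn i j hij])
  nlinarith [hpj.le, hkey]

/-- nearest-neighbor transition probabilities are uniformly bounded below,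
`P(i, i±1) ≥ 1/(2(1+e))`. -/
theorem stmt16 (n : ℕ) (hn : 3 ≤ n) (i : ℕ) (hi1 : 1 ≤ i) (hin : i ≤ n) :
    (i + 1 ≤ n → 1 / (2 * (1 + Real.exp 1)) ≤ Pmat n i (i + 1)) ∧
    (2 ≤ i → 1 / (2 * (1 + Real.exp 1)) ≤ Pmat n i (i - 1)) := by
  constructor
  · intro h
    have hP : Pmat n i (i + 1) = p n (i + 1) / (2 * (p n i + p n (i + 1))) := by
      unfold Pmat
      rw [if_neg (by omega), if_pos rfl]
    rw [hP]
    apply main_bound n hn i (i + 1)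
    push_cast
    rw [abs_le]
    constructor <;> linarith
  · intro h
    have hP : Pmat n i (i - 1) = p n (i - 1) / (2 * (p n i + p n (i - 1))) := by
      unfold Pmat
      rw [if_neg (by omega), if_neg (by omega), if_pos (by omega)]
    rw [hP]
    apply main_bound n hn i (i - 1)
    have hc : ((i - 1 : ℕ) : ℝ) = (i : ℝ) - 1 := by
      push_cast [Nat.cast_sub hi1]
      ring
    rw [hc, abs_le]
    constructor <;> linarith

end RareChain
end
end

section
/- The committor satisfies u(2) = (1/p(1) + 1/p(2)) / ∑_{i=1}^{n−1} (1/p(i) + 1/p(i+1)); moreover, if n ≥ 13 then u(2) ≤ 2·e^{−(n−1)/(4π)}. -/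
open Finset Filter
open scoped Real

noncomputable section

namespace RareChain

lemma Z_pos {n : ℕ} (hn : 1 ≤ n) : 0 < Z n := by
  apply Finset.sum_pos (fun j _ => Real.exp_pos _)
  exact ⟨1, Finset.mem_Icc.mpr ⟨le_refl 1, hn⟩⟩
lemma p_pos {n : ℕ} (hn : 1 ≤ n) (i : ℕ) : 0 < p n i :=
  div_pos (Real.exp_pos _) (Z_pos hn)
lemma Pmat_left (n i : ℕ) (h2 : 2 ≤ i) (hin : i ≤ n) :
    Pmat n i (i-1) = p n (i-1) / (2 * (p n i + p n (i-1))) := by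
  unfold Pmat; rw [if_neg (by omega), if_neg (by omega), if_pos (by omega)]
lemma Pmat_right (n i : ℕ) (h1 : 1 ≤ i) (hin : i + 1 ≤ n) :
    Pmat n i (i+1) = p n (i+1) / (2 * (p n i + p n (i+1))) := by
  unfold Pmat; rw [if_neg (by omega), if_pos rfl]
lemma Pmat_diag (n i : ℕ) (h2 : 2 ≤ i) (hin : i + 1 ≤ n) :
    Pmat n i i = 1 - p n (i+1) / (2*(p n i + p n (i+1))) - p n (i-1) / (2*(p n i + p n (i-1))) := by
  unfold Pmat
  rw [if_neg (by omega), if_neg (by omega), if_neg (by omega), if_pos rfl, if_pos hin, if_pos h2]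

lemma hrel (n : ℕ) (hn : 3 ≤ n) (u : ℕ → ℝ)
    (hharm : ∀ i, 2 ≤ i → i ≤ n - 1 → u i = ∑ j ∈ Finset.Icc 1 n, Pmat n i j * u j)
    (i : ℕ) (h2 : 2 ≤ i) (hin : i ≤ n - 1) :
    p n (i+1) * (p n i + p n (i-1)) * (u (i+1) - u i)
      = p n (i-1) * (p n i + p n (i+1)) * (u i - u (i-1)) := by
  have hn1 : 1 ≤ n := by omega
  have hp := p_pos hn1
  have key : ∑ j ∈ Finset.Icc 1 n, Pmat n i j * u j
      = Pmat n i (i-1) * u (i-1) + (Pmat n i i * u i + Pmat n i (i+1) * u (i+1)) := by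
    rw [← Finset.sum_subset (s₁ := ({i-1, i, i+1} : Finset ℕ))
      (by intro j hj; simp only [Finset.mem_insert, Finset.mem_singleton] at hj
          rw [Finset.mem_Icc]; omega)
      (by intro j hj hjs
          simp only [Finset.mem_insert, Finset.mem_singleton, not_or] at hjs
          rw [Finset.mem_Icc] at hj
          unfold Pmat
          rw [if_neg (by omega), if_neg (by omega), if_neg (by omega), if_neg (by omega),
            zero_mul])]
    rw [Finset.sum_insert (by simp only [Finset.mem_insert, Finset.mem_singleton]; omega),
      Finset.sum_insert (by simp only [Finset.mem_singleton]; omega), Finset.sum_singleton]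
  have h := hharm i h2 hin
  rw [key, Pmat_left n i h2 (by omega), Pmat_right n i (by omega) (by omega),
    Pmat_diag n i h2 (by omega)] at h
  have hD1 : (0:ℝ) < p n i + p n (i-1) := add_pos (hp i) (hp (i-1))
  have hD2 : (0:ℝ) < p n i + p n (i+1) := add_pos (hp i) (hp (i+1))
  field_simp at h
  have h8 : ((8:ℝ)*((p n i + p n (i-1)) * (p n i + p n (i+1)))) ≠ 0 :=
    ne_of_gt (by have := mul_pos hD1 hD2; linarith)
  refine mul_left_cancel₀ h8 ?_
  linear_combination (-8*((p n i + p n (i-1)) * (p n i + p n (i+1)))) * h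

lemma hclaim (n : ℕ) (hn : 3 ≤ n) (u : ℕ → ℝ) (hu1 : u 1 = 0)
    (hharm : ∀ i, 2 ≤ i → i ≤ n - 1 → u i = ∑ j ∈ Finset.Icc 1 n, Pmat n i j * u j) :
    ∀ i, 1 ≤ i → i ≤ n - 1 →
      (u (i+1) - u i) * (p n i * p n (i+1)) * (p n 1 + p n 2)
        = u 2 * (p n i + p n (i+1)) * (p n 1 * p n 2) := by
  intro i
  induction i with
  | zero => omega
  | succ k ih =>
    intro h1 h2
    rcases Nat.eq_zero_or_pos k with hk | hk
    · subst hk; rw [hu1]; ring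
    · have hp := p_pos (n := n) (by omega)
      have H1 := hrel n hn u hharm (k+1) (by omega) h2
      simp only [Nat.add_sub_cancel] at H1
      have H2 := ih hk (by omega)
      have hab : (p n k + p n (k+1)) ≠ 0 := ne_of_gt (add_pos (hp k) (hp (k+1)))
      refine mul_left_cancel₀ hab ?_
      linear_combination (p n (k+1) * (p n 1 + p n 2)) * H1 + (p n (k+1) + p n (k+2)) * H2

lemma formula (n : ℕ) (hn : 3 ≤ n) (u : ℕ → ℝ) (hu1 : u 1 = 0) (hun : u n = 1)
    (hharm : ∀ i, 2 ≤ i → i ≤ n - 1 → u i = ∑ j ∈ Finset.Icc 1 n, Pmat n i j * u j) :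
    u 2 = (1 / p n 1 + 1 / p n 2) /
        ∑ i ∈ Finset.Icc 1 (n - 1), (1 / p n i + 1 / p n (i + 1)) := by
  have hp := p_pos (n := n) (by omega)
  have hS : 0 < ∑ i ∈ Finset.Icc 1 (n - 1), (1 / p n i + 1 / p n (i + 1)) := by
    apply Finset.sum_pos (fun i _ => add_pos (one_div_pos.mpr (hp i)) (one_div_pos.mpr (hp (i+1))))
    exact ⟨1, Finset.mem_Icc.mpr ⟨le_refl 1, by omega⟩⟩
  have htel : ∑ i ∈ Finset.Icc 1 (n - 1), (u (i+1) - u i) = 1 := by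
    rw [show Finset.Icc 1 (n-1) = Finset.Ico 1 n from by
      rw [← Finset.Ico_add_one_right_eq_Icc]; congr 1; omega]
    rw [Finset.sum_Ico_eq_sum_range]
    have : ∀ i ∈ Finset.range (n - 1), u (1 + i + 1) - u (1 + i)
        = (fun j => u (j + 1)) (i + 1) - (fun j => u (j + 1)) i := by
      intro i _; simp [add_comm 1 i]
    rw [Finset.sum_congr rfl this, Finset.sum_range_sub (fun j => u (j + 1))]
    have : n - 1 + 1 = n := by omega
    rw [this, hun, hu1]; ring
  have hd : ∀ i ∈ Finset.Icc 1 (n - 1), u (i+1) - u i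
      = (u 2 * (p n 1 * p n 2 / (p n 1 + p n 2))) * (1 / p n i + 1 / p n (i+1)) := by
    intro i hi
    rw [Finset.mem_Icc] at hi
    have hc := hclaim n hn u hu1 hharm i hi.1 hi.2
    have h1 : p n i ≠ 0 := (hp i).ne'
    have h2 : p n (i+1) ≠ 0 := (hp (i+1)).ne'
    have h3 : p n 1 ≠ 0 := (hp 1).ne'
    have h4 : p n 2 ≠ 0 := (hp 2).ne'
    have h5 : p n 1 + p n 2 ≠ 0 := ne_of_gt (add_pos (hp 1) (hp 2))
    field_simp
    linear_combination hc
  rw [Finset.sum_congr rfl hd, ← Finset.mul_sum] at htel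
  rw [eq_div_iff hS.ne']
  have h3 : p n 1 ≠ 0 := (hp 1).ne'
  have h4 : p n 2 ≠ 0 := (hp 2).ne'
  have h5 : p n 1 + p n 2 ≠ 0 := ne_of_gt (add_pos (hp 1) (hp 2))
  field_simp at htel ⊢
  linear_combination htel

set_option maxHeartbeats 1000000 in
lemma bound (n : ℕ) (hn13 : 13 ≤ n) :
    (1 / p n 1 + 1 / p n 2) /
        (∑ i ∈ Finset.Icc 1 (n - 1), (1 / p n i + 1 / p n (i + 1)))
      ≤ 2 * Real.exp (-((n : ℝ) - 1) / (4 * Real.pi)) := by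
  have hπ := Real.pi_pos
  have hZ : 0 < Z n := Z_pos (by omega)
  have hn1 : (12:ℝ) ≤ (n:ℝ) - 1 := by
    have : (13:ℝ) ≤ (n:ℝ) := by exact_mod_cast hn13
    linarith
  set c : ℝ := ((n:ℝ) - 1) / (4 * Real.pi) with hc
  set θ : ℝ := 4 * Real.pi / ((n:ℝ) - 1) with hθ
  have hcpos : 0 < c := by positivity
  have hθpos : 0 < θ := by positivity
  have hθle : θ ≤ Real.pi / 3 := by
    rw [hθ, div_le_div_iff₀ (by linarith) (by norm_num)]
    nlinarith
  have hcos1 : Real.cos θ ≤ 1 := Real.cos_le_one θ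
  have hcoshalf : 1/2 ≤ Real.cos θ := by
    rw [← Real.cos_pi_div_three]
    exact Real.cos_le_cos_of_nonneg_of_le_pi hθpos.le (by linarith) hθle
  have hinv : ∀ i, 1 / p n i = Z n * Real.exp (-(w n i)) := by
    intro i
    rw [p, one_div_div, Real.exp_neg]
    ring
  set T : ℝ := ∑ i ∈ Finset.Icc 1 (n - 1),
      (Real.exp (-(w n i)) + Real.exp (-(w n (i+1)))) with hT
  have hSrw : (∑ i ∈ Finset.Icc 1 (n - 1), (1 / p n i + 1 / p n (i + 1))) = Z n * T := by
    rw [hT, Finset.mul_sum]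
    exact Finset.sum_congr rfl fun i _ => by rw [hinv, hinv]; ring
  have hNrw : 1 / p n 1 + 1 / p n 2
      = Z n * (Real.exp (-(w n 1)) + Real.exp (-(w n 2))) := by
    rw [hinv, hinv]; ring
  rw [hSrw, hNrw, mul_div_mul_left _ _ hZ.ne']
  -- values of w
  have hw1 : w n 1 = c := by
    simp [w, hc]
  have hw2 : w n 2 = c * Real.cos θ := by
    rw [w, hc, hθ]
    norm_num
  -- numerator bound
  have hN : Real.exp (-(w n 1)) + Real.exp (-(w n 2)) ≤ 2 * Real.exp (-(c * Real.cos θ)) := by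
    rw [hw1, hw2]
    have h1 : Real.exp (-c) ≤ Real.exp (-(c * Real.cos θ)) := by
      apply Real.exp_le_exp.mpr
      nlinarith
    linarith
  -- denominator bound
  obtain ⟨m, hm4⟩ : ∃ m, 4 * m ≤ n - 1 ∧ n - 1 ≤ 4 * m + 3 := ⟨(n-1)/4, by omega, by omega⟩
  have hmem : m + 1 ∈ Finset.Icc 1 (n - 1) := Finset.mem_Icc.mpr ⟨by omega, by omega⟩
  set φ : ℝ := 4 * Real.pi * (m:ℝ) / ((n:ℝ) - 1) with hφ
  have hwm : w n (m + 1) = c * Real.cos φ := by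
    rw [w, hc, hφ]
    push_cast
    ring_nf
  have hcast1 : (4:ℝ) * (m:ℝ) ≤ (n:ℝ) - 1 := by
    have := hm4.1
    have h := Nat.cast_le (α := ℝ).mpr this
    push_cast at h
    have hn' : (1:ℝ) ≤ (n:ℝ) := by linarith
    rw [Nat.cast_sub (by omega)] at h
    push_cast at h
    linarith
  have hcast2 : (n:ℝ) - 1 ≤ 4 * (m:ℝ) + 3 := by
    have := hm4.2
    have h := Nat.cast_le (α := ℝ).mpr this
    rw [Nat.cast_sub (by omega)] at h
    push_cast at h
    linarith
  have hφle : φ ≤ Real.pi := by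
    rw [hφ, div_le_iff₀ (by linarith)]
    nlinarith
  have hφge : Real.pi - θ ≤ φ := by
    rw [hφ, le_div_iff₀ (by linarith), hθ]
    have e1 : 4 * Real.pi / ((n:ℝ)-1) * ((n:ℝ)-1) = 4 * Real.pi := by
      field_simp
    nlinarith [e1]
  have hcosφ : Real.cos φ ≤ -Real.cos θ := by
    rw [← Real.cos_pi_sub]
    exact Real.cos_le_cos_of_nonneg_of_le_pi (by linarith) hφle hφge
  have hTge : Real.exp (c * Real.cos θ) ≤ T := by
    calc Real.exp (c * Real.cos θ) ≤ Real.exp (-(w n (m+1))) := by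
          apply Real.exp_le_exp.mpr
          rw [hwm]
          nlinarith
      _ ≤ Real.exp (-(w n (m+1))) + Real.exp (-(w n ((m+1)+1))) :=
          le_add_of_nonneg_right (Real.exp_pos _).le
      _ ≤ T := by
          rw [hT]
          exact Finset.single_le_sum (f := fun i => Real.exp (-(w n i)) + Real.exp (-(w n (i+1))))
            (fun i _ => add_nonneg (Real.exp_pos _).le (Real.exp_pos _).le) hmem
  -- conclude
  have hexp : 0 < Real.exp (c * Real.cos θ) := Real.exp_pos _
  calc (Real.exp (-(w n 1)) + Real.exp (-(w n 2))) / T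
      ≤ 2 * Real.exp (-(c * Real.cos θ)) / Real.exp (c * Real.cos θ) := by
        apply div_le_div₀ (by positivity) hN hexp hTge
    _ = 2 * Real.exp (-(c * Real.cos θ) - c * Real.cos θ) := by
        rw [mul_div_assoc, ← Real.exp_sub]
    _ ≤ 2 * Real.exp (-((n:ℝ) - 1) / (4 * Real.pi)) := by
        have : -((n:ℝ) - 1) / (4 * Real.pi) = -c := by rw [hc]; ring
        rw [this]
        have : -(c * Real.cos θ) - c * Real.cos θ ≤ -c := by nlinarith
        have := Real.exp_le_exp.mpr this
        linarith


/-- Eq. (8) of the paper and its proof in Appendix B: the committor satisfies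
the explicit formula `u(2) = (1/p(1) + 1/p(2)) / ∑_{i=1}^{n-1} (1/p(i) + 1/p(i+1))`, and is
exponentially small: `u(2) ≤ 2 e^{-(n-1)/(4π)}` for `n ≥ 13`. -/
theorem stmt17 (n : ℕ) (hn : 3 ≤ n) (u : ℕ → ℝ)
    (hu1 : u 1 = 0) (hun : u n = 1)
    (hharm : ∀ i, 2 ≤ i → i ≤ n - 1 → u i = ∑ j ∈ Finset.Icc 1 n, Pmat n i j * u j) :
    u 2 = (1 / p n 1 + 1 / p n 2) /
        ∑ i ∈ Finset.Icc 1 (n - 1), (1 / p n i + 1 / p n (i + 1)) ∧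
    (13 ≤ n → u 2 ≤ 2 * Real.exp (-((n : ℝ) - 1) / (4 * Real.pi))) := by
  have hform := formula n hn u hu1 hun hharm
  exact ⟨hform, fun hn13 => hform ▸ bound n hn13⟩

end RareChain
end
end
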